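/- arXiv:2008.08174 — 4 statements merged into one kernel-verified Lean document; each statement's English description precedes it below -/
import Mathlib

section
/- Let q ≥ 2, k ≥ 1, n > 2k, let x ∈ Irr(n) be irreducible, let x'' ∈ D_k^{*(≤1)}(x), and set μ = μ(φ̄(x)), μ'' = μ(φ̄(x'')), μ_j = ins_k(μ, j) and μ''_j = ins_k(μ'', j) for j ∈ {1,…,k}. If |μ''| = |μ| + 2k, then there exist an index j* ∈ {1,…,k} and a symbol a ∈ Σ_q∖{0} such that μ''_{j*} is obtained from μ_{j*} by inserting the two adjacent symbols a, (−a mod q) at some position, and for every j ≠ j*, μ''_j is obtained from μ_j by inserting two symbols 0 that are either adjacent or separated by exactly one (unchanged) symbol of μ_j. -/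
open List

namespace NoisyDup

variable {q : ℕ}

/-- Tandem duplication `T_{i,k}`: duplicates the length-`k` substring starting
after position `i` (0-based index `i`), if it exists. -/
def dup (i k : ℕ) (x : List (ZMod q)) : List (ZMod q) :=
  if i + k ≤ x.length then x.take i ++ (x.drop i).take k ++ x.drop i else x

/-- Add `a` (mod `q`) to the entry at 0-based index `i`. -/
def addAt (x : List (ZMod q)) (i : ℕ) (a : ZMod q) : List (ZMod q) :=
  x.set i (x.getD i 0 + a)

/-- One exact tandem duplication of length `k`. -/
def ExactStep (k : ℕ) (x y : List (ZMod q)) : Prop :=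
  ∃ i, i + k ≤ x.length ∧ y = dup i k x

/-- One noisy duplication of length `k`: an exact duplication followed by adding
some `a ≠ 0` to one symbol of the inserted copy (positions are 1-indexed). -/
def NoisyStep (k : ℕ) (x y : List (ZMod q)) : Prop :=
  ∃ (i : ℕ) (a : ZMod q) (j : ℕ), i + k ≤ x.length ∧ a ≠ 0 ∧
    i + k + 1 ≤ j ∧ j ≤ i + 2 * k ∧ y = addAt (dup i k x) (j - 1) a

/-- Descendants by exact duplications only: `D_k^{*(0)}`. -/
def ExactDesc (k : ℕ) (x y : List (ZMod q)) : Prop :=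
  Relation.ReflTransGen (ExactStep k) x y

/-- The descendant cone `D_k^{*(≤1)}`: any number of exact duplications and at
most one noisy duplication. -/
def descCone (k : ℕ) (x : List (ZMod q)) : Set (List (ZMod q)) :=
  {y | ExactDesc k x y ∨ ∃ u v, ExactDesc k x u ∧ NoisyStep k u v ∧ ExactDesc k v y}

/-- `φ̂(x)`: the first `k` symbols. -/
def hatPhi (k : ℕ) (x : List (ZMod q)) : List (ZMod q) := x.take k

/-- `φ̄(x)_i = x_{i+k} - x_i` (1-indexed), a string of length `|x| - k`. -/
def barPhi (k : ℕ) (x : List (ZMod q)) : List (ZMod q) :=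
  (List.range (x.length - k)).map fun i => x.getD (i + k) 0 - x.getD i 0

/-- Auxiliary for `mu`: `cnt` counts the current run of zeros. -/
def muAux (k : ℕ) : ℕ → List (ZMod q) → List (ZMod q)
  | cnt, [] => List.replicate (cnt % k) 0
  | cnt, a :: t =>
      if a = 0 then muAux k (cnt + 1) t
      else List.replicate (cnt % k) 0 ++ a :: muAux k 0 t

/-- `μ(z)`: reduce the length of every maximal run of zeros modulo `k`. -/
def mu (k : ℕ) (z : List (ZMod q)) : List (ZMod q) := muAux k 0 z

/-- `x` contains a tandem repeat of length `k`. -/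
def HasRepeat (k : ℕ) (x : List (ZMod q)) : Prop :=
  ∃ i, i + 2 * k ≤ x.length ∧ (x.drop i).take k = (x.drop (i + k)).take k

/-- `x` is irreducible: it contains no tandem repeat of length `k`. -/
def IsIrreducible (k : ℕ) (x : List (ZMod q)) : Prop := ¬ HasRepeat k x

/-- The duplication root: the (unique) irreducible ancestor of `x` under exact
duplications of length `k`. -/
noncomputable def rt (k : ℕ) (x : List (ZMod q)) : List (ZMod q) :=
  haveI := Classical.propDecidable (∃ z, IsIrreducible k z ∧ ExactDesc k z x)
  if h : ∃ z, IsIrreducible k z ∧ ExactDesc k z x then h.choose else x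

/-- The set of irreducible strings of length `n` over `Σ_q`. -/
def Irr (k n : ℕ) : Set (List (ZMod q)) := {x | x.length = n ∧ IsIrreducible k x}

/-- `ins_k(u, j)`: the subsequence of entries in (1-indexed) positions congruent
to `j` modulo `k`. -/
def splitk (k j : ℕ) (u : List (ZMod q)) : List (ZMod q) :=
  ((u.zipIdx.map Prod.swap).filter fun p => p.1 % k == j - 1).map Prod.snd

/-- The interleaving `inl(u) = ins_k(u,1) ⋯ ins_k(u,k)`. -/
def inl (k : ℕ) (u : List (ZMod q)) : List (ZMod q) :=
  ((List.range k).map fun j => splitk k (j + 1) u).flatten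

/-- The indicator `Γ(z)` of the nonzero entries of `z`. -/
def gamma (z : List (ZMod q)) : List Bool := z.map fun a => decide (a ≠ 0)

/-- The cumulative-sum map (mod `q`). -/
def cusum (z : List (ZMod q)) : List (ZMod q) :=
  (List.range z.length).map fun i => (z.take (i + 1)).sum

/-- Hamming weight of a binary string. -/
def wt (u : List Bool) : ℕ := u.count true

/-- The VT syndrome `Σ i·u_i` (1-indexed). -/
def vtSum (u : List Bool) : ℕ := ((u.zipIdx.map Prod.swap).map fun p => if p.2 then p.1 + 1 else 0).sum

/-- The (variable-length) Varshamov–Tenengolts code. -/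
def CVT (α m : ℕ) : Set (List Bool) := {z | z.length ≤ m - 1 ∧ vtSum z % m = α}

/-- `Σ_{i=1}^{|u|} i · (u_1 + ⋯ + u_i)`. -/
def wSum (u : List Bool) : ℕ :=
  ((List.range u.length).map fun i => (i + 1) * wt (u.take (i + 1))).sum

/-- Tenengolts' binary map `ζ`. -/
def zeta (z : List (ZMod q)) : List Bool :=
  (z.zipIdx.map Prod.swap).map fun p => if p.1 = 0 then true else decide ((z.getD (p.1 - 1) 0).val ≤ p.2.val)

/-- `Σ_{i=1}^{|z|} (i-1)·ζ(z)_i`. -/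
def tqSum (z : List (ZMod q)) : ℕ := (((zeta z).zipIdx.map Prod.swap).map fun p => if p.2 then p.1 else 0).sum

/-- Tenengolts' (variable-length) `q`-ary single-indel-correcting code. -/
def CTq (α β m : ℕ) : Set (List (ZMod q)) :=
  {z | z.length ≤ m ∧ (z.map ZMod.val).sum % q = α ∧ tqSum z % m = β}

/-- The length of `s_j = Γ(ins_k(μ,j))` for a codeword of length `n`
(the number of positions in `{1,…,n-k}` congruent to `j` mod `k`). -/
def sLen (k n j : ℕ) : ℕ := (List.range (n - k)).countP fun i => i % k == j - 1

/-- Admissibility of the parameters of the code `C_nd`. -/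
def Admissible (q k n : ℕ) (a c : ℕ → ℕ) (b a1 a2 a3 a4 b1 b2 b3 b4 : ℕ) : Prop :=
  (∀ j ∈ Finset.Icc 1 k, a j ≤ 2 * (sLen k n j + 1)) ∧
  (∀ j ∈ Finset.Icc 1 k, c j ≤ 2 * sLen k n j) ∧
  b ≤ 4 ∧ a1 ≤ q - 1 ∧ a2 ≤ q - 1 ∧ a3 ≤ q - 1 ∧ a4 ≤ q - 1 ∧
  b1 ≤ (n - k) / 2 ∧ b2 ≤ (n - k) / 2 ∧ b3 ≤ n - k - 1 ∧ b4 ≤ n - k - 1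

/-- The code `C_nd` for the noisy duplication channel. -/
def Cnd (k n : ℕ) (a c : ℕ → ℕ) (b a1 a2 a3 a4 b1 b2 b3 b4 : ℕ) : Set (List (ZMod q)) :=
  {x | x.length = n ∧ IsIrreducible k x ∧
    (∀ j ∈ Finset.Icc 1 k,
        gamma (splitk k j (mu k (barPhi k x))) ∈
          CVT (a j) (2 * (gamma (splitk k j (mu k (barPhi k x)))).length + 3)) ∧
    (∀ j ∈ Finset.Icc 1 k,
        wSum (gamma (splitk k j (mu k (barPhi k x)))) %
          (2 * (gamma (splitk k j (mu k (barPhi k x)))).length + 1) = c j) ∧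
    ((Finset.Icc 1 k).sum fun j => wt (gamma (splitk k j (mu k (barPhi k x))))) % 5 = b ∧
    splitk 2 1 (inl k (mu k (barPhi k x))) ∈ CTq a1 b1 ((n - k + 1) / 2) ∧
    splitk 2 2 (inl k (mu k (barPhi k x))) ∈ CTq a2 b2 ((n - k + 1) / 2) ∧
    cusum (inl k (mu k (barPhi k x))) ∈ CTq a3 b3 (n - k) ∧
    inl k (mu k (barPhi k x)) ∈ CTq a4 b4 (n - k)}

/-- `w` is obtained from `u` by deleting one occurrence of the symbol `b`. -/
def delSymb (u w : List (ZMod q)) (b : ZMod q) : Prop :=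
  ∃ i, i < u.length ∧ u.getD i 0 = b ∧ w = u.eraseIdx i

/-- `w` is obtained from `u` by inserting the symbol `b` at some position. -/
def insOne (u w : List (ZMod q)) (b : ZMod q) : Prop :=
  ∃ i, i ≤ u.length ∧ w = u.take i ++ b :: u.drop i

/-- `w` is obtained from `u` by inserting the adjacent pair `b, c`. -/
def insPair (u w : List (ZMod q)) (b c : ZMod q) : Prop :=
  ∃ i, i ≤ u.length ∧ w = u.take i ++ b :: c :: u.drop i

/-- `w` is obtained from `u` by inserting two `0`s separated by exactly one
(unchanged) symbol of `u`. -/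
def insSpread0 (u w : List (ZMod q)) : Prop :=
  ∃ i, i < u.length ∧ w = u.take i ++ 0 :: u.getD i 0 :: 0 :: u.drop (i + 1)

/-- `w` is obtained from `u` by inserting a nonzero `a` and replacing the
symbol `c` immediately following the insertion point by `c - a`. -/
def insSub (u w : List (ZMod q)) : Prop :=
  ∃ a : ZMod q, a ≠ 0 ∧ ∃ i, i < u.length ∧
    w = u.take i ++ a :: (u.getD i 0 - a) :: u.drop (i + 1)

/-- `w` is obtained from `u` by replacing a single symbol `0` by a nonzero symbol. -/
def subOne (u w : List (ZMod q)) : Prop :=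
  ∃ i, i < u.length ∧ u.getD i 0 = 0 ∧ ∃ a : ZMod q, a ≠ 0 ∧ w = u.set i a

/-- `w` is obtained from `u` by replacing two adjacent symbols `0, c` by
`a, c - a` for some nonzero `a`. -/
def subTwo (u w : List (ZMod q)) : Prop :=
  ∃ i, i + 1 < u.length ∧ u.getD i 0 = 0 ∧ ∃ a : ZMod q, a ≠ 0 ∧
    w = u.take i ++ a :: (u.getD (i + 1) 0 - a) :: u.drop (i + 2)

/-- `w` is obtained from `u` by swapping an adjacent pair `b, 0` (with `b ≠ 0`)
into `0, b`. -/
def swapPair (u w : List (ZMod q)) : Prop :=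
  ∃ i, i + 1 < u.length ∧ u.getD i 0 ≠ 0 ∧ u.getD (i + 1) 0 = 0 ∧
    w = u.take i ++ 0 :: u.getD i 0 :: u.drop (i + 2)

/-- `w` is obtained from `u` by deleting a single symbol. -/
def delQ (u w : List (ZMod q)) : Prop := ∃ i, i < u.length ∧ w = u.eraseIdx i

/-- `w` is obtained from `u` by inserting a single symbol. -/
def insQ (u w : List (ZMod q)) : Prop :=
  ∃ (i : ℕ) (b : ZMod q), i ≤ u.length ∧ w = u.take i ++ b :: u.drop i




/-! ## Auxiliary development -/

/-! ### basic muAux lemmas -/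

lemma muAux_nil (k c : ℕ) : muAux k c ([] : List (ZMod q)) = List.replicate (c % k) 0 := rfl

lemma muAux_cons_zero (k c : ℕ) (t : List (ZMod q)) :
    muAux k c (0 :: t) = muAux k (c + 1) t := by simp [muAux]

lemma muAux_cons_ne (k c : ℕ) (g : ZMod q) (hg : g ≠ 0) (t : List (ZMod q)) :
    muAux k c (g :: t) = List.replicate (c % k) 0 ++ g :: muAux k 0 t := by
  simp [muAux, hg]

lemma muAux_zs (k m : ℕ) (t : List (ZMod q)) :
    ∀ c, muAux k c (List.replicate m 0 ++ t) = muAux k (c + m) t := by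
  induction m with
  | zero => intro c; simp
  | succ m ih =>
      intro c
      rw [List.replicate_succ, List.cons_append, muAux_cons_zero, ih]
      congr 1
      omega

lemma mu_zs (k m : ℕ) : mu k (List.replicate m 0 : List (ZMod q)) = List.replicate (m % k) 0 := by
  have := muAux_zs k m ([] : List (ZMod q)) 0
  simpa [mu, muAux_nil] using this

lemma mu_zs_cons (k m : ℕ) (g : ZMod q) (hg : g ≠ 0) (t : List (ZMod q)) :
    mu k (List.replicate m 0 ++ g :: t) =
      List.replicate (m % k) 0 ++ g :: mu k t := by
  rw [mu, muAux_zs, muAux_cons_ne k _ g hg]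
  simp [mu]

lemma muAux_mod (k : ℕ) (t : List (ZMod q)) : ∀ c, muAux k (c + k) t = muAux k c t := by
  induction t with
  | nil => intro c; simp [muAux_nil, Nat.add_mod_right]
  | cons b t ih =>
      intro c
      by_cases hb : b = 0
      · subst hb
        rw [muAux_cons_zero, muAux_cons_zero, show c + k + 1 = c + 1 + k from by omega, ih]
      · rw [muAux_cons_ne k _ b hb, muAux_cons_ne k _ b hb, Nat.add_mod_right]

lemma muAux_insert_zs (k : ℕ) (t : List (ZMod q)) (s : List (ZMod q)) :
    ∀ c, muAux k c (s ++ List.replicate k 0 ++ t) = muAux k c (s ++ t) := by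
  induction s with
  | nil =>
      intro c
      simp only [List.nil_append]
      rw [muAux_zs]
      exact muAux_mod k t c
  | cons b s ih =>
      intro c
      by_cases hb : b = 0
      · subst hb
        simp only [List.cons_append]
        rw [muAux_cons_zero, muAux_cons_zero, ih]
      · simp only [List.cons_append]
        rw [muAux_cons_ne k _ b hb, muAux_cons_ne k _ b hb, ih 0]

lemma mu_insert_zs (k : ℕ) (s t : List (ZMod q)) :
    mu k (s ++ List.replicate k 0 ++ t) = mu k (s ++ t) := muAux_insert_zs k t s 0

/-- every list splits off its leading zero run -/
lemma exists_run (z : List (ZMod q)) :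
    ∃ m v, z = List.replicate m 0 ++ v ∧ (v = [] ∨ ∃ w t, w ≠ (0 : ZMod q) ∧ v = w :: t) := by
  induction z with
  | nil => exact ⟨0, [], by simp, Or.inl rfl⟩
  | cons b z ih =>
      by_cases hb : b = 0
      · obtain ⟨m, v, hz, hv⟩ := ih
        exact ⟨m + 1, v, by subst hb; rw [List.replicate_succ, List.cons_append, hz], hv⟩
      · exact ⟨0, b :: z, by simp, Or.inr ⟨b, z, hb, rfl⟩⟩

/-- mu commutes with prepending a short block ending in a nonzero symbol -/
lemma mu_short_prepend (k : ℕ) : ∀ n (P X : List (ZMod q)), P.length = n → P.length < k →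
    (P = [] ∨ ∃ P₀ g, g ≠ (0:ZMod q) ∧ P = P₀ ++ [g]) →
    mu k (P ++ X) = P ++ mu k X := by
  intro n
  induction n using Nat.strong_induction_on with
  | _ n ih =>
    intro P X hn hlt hP
    rcases hP with h | ⟨P₀, g, hg, rfl⟩
    · simp [h]
    obtain ⟨m, v, hsplit, hv⟩ := exists_run P₀
    rcases hv with rfl | ⟨w, t, hw, rfl⟩
    · -- P₀ is all zeros; P = 0^m ++ [g]
      subst hsplit
      have hm : m < k := by
        simp only [List.length_append, List.length_replicate, List.append_nil,
          List.length_cons, List.length_nil] at hlt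
        omega
      rw [List.append_nil] at *
      have : (List.replicate m 0 ++ [g]) ++ X = List.replicate m 0 ++ g :: X := by
        simp
      rw [this, mu_zs_cons k m g hg, Nat.mod_eq_of_lt hm]
      simp [mu, List.append_assoc]
    · subst hsplit
      have hm : m + 1 + t.length + 1 < k := by
        simp only [List.length_append, List.length_replicate, List.length_cons,
          List.length_nil] at hlt
        omega
      have hlen2 : (t ++ [g]).length < k := by
        simp only [List.length_append, List.length_cons, List.length_nil]
        omega
      have hlt' : (t ++ [g]).length < n := by
        subst hn
        simp only [List.length_append, List.length_replicate, List.length_cons,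
          List.length_nil]
        omega
      have ihres := ih (t ++ [g]).length hlt' (t ++ [g]) X rfl hlen2 (Or.inr ⟨t, g, hg, rfl⟩)
      have e1 : (List.replicate m 0 ++ w :: t ++ [g]) ++ X
          = List.replicate m 0 ++ w :: ((t ++ [g]) ++ X) := by simp
      rw [e1, mu_zs_cons k m w hw, ihres, Nat.mod_eq_of_lt (by omega : m < k)]
      simp [List.append_assoc]


def pickMod (k t : ℕ) : ℕ → List (ZMod q) → List (ZMod q)
  | _, [] => []
  | o, b :: u => (if o % k = t then [b] else []) ++ pickMod k t (o+1) u

def cnt (k t : ℕ) : ℕ → ℕ → ℕ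
  | _, 0 => 0
  | o, m+1 => (if o % k = t then 1 else 0) + cnt k t (o+1) m


lemma pickMod_nil (k t o : ℕ) : pickMod k t o ([] : List (ZMod q)) = [] := rfl

lemma pickMod_cons (k t o : ℕ) (b : ZMod q) (u : List (ZMod q)) :
    pickMod k t o (b :: u) = (if o % k = t then [b] else []) ++ pickMod k t (o+1) u := rfl

lemma splitk_eq_pickMod (k j : ℕ) (u : List (ZMod q)) :
    splitk k j u = pickMod k (j-1) 0 u := by
  suffices h : ∀ (u : List (ZMod q)) (o : ℕ),
      (((u.zipIdx o).map Prod.swap).filter fun p => p.1 % k == j - 1).map Prod.snd = pickMod k (j-1) o u by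
    simpa [splitk] using h u 0
  intro u
  induction u with
  | nil => intro o; rfl
  | cons b u ih =>
      intro o
      rw [List.zipIdx_cons, List.map_cons]
      by_cases ho : o % k = j - 1
      · simp [List.filter_cons, ho, pickMod_cons, ih]
      · simp [List.filter_cons, ho, pickMod_cons, ih]

lemma pickMod_append (k t : ℕ) (u v : List (ZMod q)) :
    ∀ o, pickMod k t o (u ++ v) = pickMod k t o u ++ pickMod k t (o + u.length) v := by
  induction u with
  | nil => intro o; simp [pickMod_nil]
  | cons b u ih =>
      intro o
      simp only [List.cons_append, pickMod_cons, ih (o+1), List.length_cons]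
      rw [List.append_assoc, show o + (u.length + 1) = o + 1 + u.length from by omega]

lemma pickMod_replicate (k t : ℕ) (c : ZMod q) :
    ∀ m o, pickMod k t o (List.replicate m c) = List.replicate (cnt k t o m) c := by
  intro m
  induction m with
  | zero => intro o; rfl
  | succ m ih =>
      intro o
      rw [List.replicate_succ, pickMod_cons, ih, cnt]
      by_cases ho : o % k = t
      · rw [if_pos ho, if_pos ho, Nat.add_comm 1 (cnt k t (o+1) m), List.replicate_succ]
        rfl
      · simp [ho]

lemma cnt_add (k t : ℕ) (m n : ℕ) : ∀ o, cnt k t o (m + n) = cnt k t o m + cnt k t (o + m) n := by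
  induction m with
  | zero => intro o; simp [cnt]
  | succ m ih =>
      intro o
      have : m + 1 + n = (m + n) + 1 := by omega
      rw [show o + (m+1) = (o+1) + m from by omega]
      rw [this]
      show cnt k t o ((m + n) + 1) = _
      rw [cnt, cnt, ih (o+1)]
      omega

lemma cnt_one (k t o : ℕ) : cnt k t o 1 = if o % k = t then 1 else 0 := by
  rw [cnt]; rfl

lemma cnt_eq_zero (k t : ℕ) : ∀ m o, (∀ i, i < m → (o + i) % k ≠ t) → cnt k t o m = 0 := by
  intro m
  induction m with
  | zero => intro o _; rfl
  | succ m ih =>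
      intro o h
      rw [cnt]
      have h0 : o % k ≠ t := by simpa using h 0 (by omega)
      rw [if_neg h0, ih (o+1) fun i hi => by
        have := h (i+1) (by omega)
        rwa [show o + (i+1) = o + 1 + i from by omega] at this]

lemma mod_add_ne (k d x : ℕ) (h1 : 0 < d) (h2 : d < k) : (x + d) % k ≠ x % k := by
  intro h
  have hmod : x ≡ x + d [MOD k] := h.symm
  have hdvd : k ∣ (x + d) - x := (Nat.modEq_iff_dvd' (by omega)).1 hmod
  rw [show x + d - x = d from by omega] at hdvd
  exact absurd (Nat.le_of_dvd h1 hdvd) (by omega)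

lemma cnt_congr (k t : ℕ) (h : 0 < k) : ∀ m o o', o % k = o' % k → cnt k t o m = cnt k t o' m := by
  intro m
  induction m with
  | zero => intro o o' _; rfl
  | succ m ih =>
      intro o o' ho
      rw [cnt, cnt, ho, ih (o+1) (o'+1) (by rw [Nat.add_mod o 1, Nat.add_mod o' 1, ho])]

lemma pickMod_congr (k t : ℕ) (u : List (ZMod q)) : ∀ o o', o % k = o' % k →
    pickMod k t o u = pickMod k t o' u := by
  induction u with
  | nil => intro o o' _; rfl
  | cons b u ih =>
      intro o o' ho
      rw [pickMod_cons, pickMod_cons, ho, ih (o+1) (o'+1) (by rw [Nat.add_mod o 1, Nat.add_mod o' 1, ho])]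

lemma cnt_k_self (k : ℕ) (hk : 0 < k) (t : ℕ) (ht : t < k) : ∀ o, cnt k t o k = 1 := by
  intro o
  -- the unique witness in [o, o+k) congruent to t
  set w := (t + k - o % k) % k with hw
  have hok : o % k < k := Nat.mod_lt _ hk
  have hwk : w < k := Nat.mod_lt _ hk
  have hhit : (o + w) % k = t := by
    have h5 : o % k + (t + k - o % k) = t + k := by omega
    rw [Nat.add_mod o w, Nat.mod_eq_of_lt hwk, hw, Nat.add_mod_mod, h5,
      Nat.add_mod_right, Nat.mod_eq_of_lt ht]
  have h1 : cnt k t o w = 0 := by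
    apply cnt_eq_zero
    intro i hi hcontra
    -- (o+i) % k = t = (o+w) % k with i < w < k : contradiction
    have : (o + i + (w - i)) % k = (o + i) % k := by
      rw [show o + i + (w - i) = o + w from by omega, hhit, hcontra]
    exact mod_add_ne k (w - i) (o + i) (by omega) (by omega) this
  have hsplit : cnt k t o k = cnt k t o w + cnt k t (o + w) (k - w) := by
    have := cnt_add k t w (k - w) o
    rwa [show w + (k - w) = k from by omega] at this
  have h3 : cnt k t (o + w) (k - w) = cnt k t (o + w) 1 + cnt k t (o + w + 1) (k - w - 1) := by
    have := cnt_add k t 1 (k - w - 1) (o + w)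
    rwa [show 1 + (k - w - 1) = k - w from by omega] at this
  have h4 : cnt k t (o + w + 1) (k - w - 1) = 0 := by
    apply cnt_eq_zero
    intro i hi hcontra
    have : (o + w + (1 + i)) % k ≠ (o + w) % k :=
      mod_add_ne k (1 + i) (o + w) (by omega) (by omega)
    rw [show o + w + (1 + i) = o + w + 1 + i from by omega, hcontra, hhit] at this
    exact this rfl
  rw [hsplit, h1, h3, h4, cnt_one, if_pos hhit]


/-! ### chunk 3 : junction helpers, more pickMod facts, and the extraction lemma -/

lemma getD_append_len (l w : List (ZMod q)) (g : ZMod q) :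
    (l ++ g :: w).getD l.length 0 = g := by
  induction l with
  | nil => rfl
  | cons b l ih => simpa using ih

lemma drop_append_len_succ (l w : List (ZMod q)) (g : ZMod q) :
    (l ++ g :: w).drop (l.length + 1) = w := by
  induction l with
  | nil => rfl
  | cons b l ih => simpa using ih

lemma pickMod_eq_nil (k t : ℕ) (u : List (ZMod q)) :
    ∀ o, (∀ i, i < u.length → (o + i) % k ≠ t) → pickMod k t o u = [] := by
  induction u with
  | nil => intro o _; rfl
  | cons b u ih =>
      intro o h
      rw [pickMod_cons, if_neg (by simpa using h 0 (by simp)), List.nil_append]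
      exact ih (o+1) fun i hi => by
        have h2 := h (i+1) (by simp only [List.length_cons]; omega)
        rwa [show o + (i+1) = o+1+i from by omega] at h2

lemma pickMod_length (k t : ℕ) (u : List (ZMod q)) :
    ∀ o, (pickMod k t o u).length = cnt k t o u.length := by
  induction u with
  | nil => intro o; rfl
  | cons b u ih =>
      intro o
      rw [pickMod_cons, List.length_append, ih (o+1), List.length_cons]
      show _ = cnt k t o (u.length + 1)
      rw [cnt]
      by_cases ho : o % k = t <;> simp [ho]

lemma cnt_le_one (k : ℕ) (hk : 0 < k) (t : ℕ) (ht : t < k) (o m : ℕ) (hm : m ≤ k) :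
    cnt k t o m ≤ 1 := by
  have h := cnt_add k t m (k - m) o
  rw [show m + (k - m) = k from by omega, cnt_k_self k hk t ht o] at h
  omega

lemma zs_zs (n m : ℕ) (L : List (ZMod q)) :
    List.replicate n (0 : ZMod q) ++ (List.replicate m 0 ++ L) = List.replicate (n + m) 0 ++ L := by
  rw [← List.append_assoc, ← List.replicate_add]

/-- the `Concl`usion, in terms of `pickMod` at an arbitrary offset `o`. -/
def ConclO (k o : ℕ) (μ μ'' : List (ZMod q)) : Prop :=
  ∃ ts, ts < k ∧ ∃ a : ZMod q, a ≠ 0 ∧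
    insPair (pickMod k ts o μ) (pickMod k ts o μ'') a (-a) ∧
    ∀ t, t < k → t ≠ ts →
      (insPair (pickMod k t o μ) (pickMod k t o μ'') 0 0 ∨
       insSpread0 (pickMod k t o μ) (pickMod k t o μ''))

lemma extract (k : ℕ) (hk : 0 < k) (o c c' c1 c2 c3 c4 : ℕ) (G R : List (ZMod q))
    (a : ZMod q) (ha : a ≠ 0)
    (h1 : c1 + c2 + 1 = c + k) (h2 : c3 + c4 + 1 = c' + k)
    (h3 : c2 + G.length + c3 + 1 = k) :
    ConclO k o (List.replicate c 0 ++ (G ++ (List.replicate c' 0 ++ R)))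
      (List.replicate c1 0 ++ (a :: (List.replicate c2 0 ++ (G ++ (List.replicate c3 0 ++
        ((-a) :: (List.replicate c4 0 ++ R))))))) := by
  have hgl : c + G.length + c3 = c1 := by omega
  have comp1 : ∀ t, pickMod k t o (List.replicate c 0 ++ (G ++ (List.replicate c' 0 ++ R)))
      = List.replicate (cnt k t o c) 0 ++ (pickMod k t (o+c) G ++
        (List.replicate (cnt k t (o+c+G.length) c') 0 ++ pickMod k t (o+c+G.length+c') R)) := by
    intro t
    rw [pickMod_append, pickMod_append, pickMod_append, pickMod_replicate, pickMod_replicate,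
      List.length_replicate, List.length_replicate]
  have comp2 : ∀ t, pickMod k t o (List.replicate c1 0 ++ (a :: (List.replicate c2 0 ++ (G ++
        (List.replicate c3 0 ++ ((-a) :: (List.replicate c4 0 ++ R)))))))
      = List.replicate (cnt k t o c1) 0 ++ ((if (o+c1) % k = t then [a] else []) ++
        (List.replicate (cnt k t (o+c1+1) c2) 0 ++ (pickMod k t (o+c) G ++
        (List.replicate (cnt k t (o+c+G.length) c3) 0 ++ ((if (o+c1) % k = t then [(-a)] else []) ++
        (List.replicate (cnt k t (o+c1+1) c4) 0 ++ pickMod k t (o+c+G.length+c') R)))))) := by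
    intro t
    rw [pickMod_append, pickMod_replicate, List.length_replicate, pickMod_cons,
      pickMod_append, pickMod_replicate, List.length_replicate, pickMod_append,
      pickMod_append, pickMod_replicate, List.length_replicate, pickMod_cons,
      pickMod_append, pickMod_replicate, List.length_replicate]
    have eG : pickMod k t (o+c1+1+c2) G = pickMod k t (o+c) G := by
      apply pickMod_congr
      rw [show o+c1+1+c2 = o+c+k from by omega, Nat.add_mod_right]
    have ec3 : cnt k t (o+c1+1+c2+G.length) c3 = cnt k t (o+c+G.length) c3 := by
      apply cnt_congr k t hk
      rw [show o+c1+1+c2+G.length = o+c+G.length+k from by omega, Nat.add_mod_right]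
    have eif : (o+c1+1+c2+G.length+c3) % k = (o+c1) % k := by
      rw [show o+c1+1+c2+G.length+c3 = o+c1+k from by omega, Nat.add_mod_right]
    have ec4 : cnt k t (o+c1+1+c2+G.length+c3+1) c4 = cnt k t (o+c1+1) c4 := by
      apply cnt_congr k t hk
      rw [show o+c1+1+c2+G.length+c3+1 = o+c1+1+k from by omega, Nat.add_mod_right]
    have eR : pickMod k t (o+c1+1+c2+G.length+c3+1+c4) R = pickMod k t (o+c+G.length+c') R := by
      apply pickMod_congr
      rw [show o+c1+1+c2+G.length+c3+1+c4 = o+c+G.length+c'+(k+k) from by omega,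
        ← Nat.add_assoc, Nat.add_mod_right, Nat.add_mod_right]
    rw [eG, ec3, eif, ec4, eR]
  -- the two counting identities
  have W1 : ∀ t, t < k → cnt k t o c1 + (if (o+c1) % k = t then 1 else 0) + cnt k t (o+c1+1) c2
      = cnt k t o c + 1 := by
    intro t ht
    have way1 : cnt k t o (c + k) = cnt k t o c1 + (cnt k t (o+c1) 1 + cnt k t (o+c1+1) c2) := by
      rw [show c + k = c1 + (1 + c2) from by omega, cnt_add, cnt_add]
    have way2 : cnt k t o (c + k) = cnt k t o c + 1 := by
      rw [cnt_add, cnt_k_self k hk t ht]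
    rw [cnt_one] at way1
    omega
  have W2 : ∀ t, t < k → cnt k t (o+c+G.length) c3 + (if (o+c1) % k = t then 1 else 0)
      + cnt k t (o+c1+1) c4 = cnt k t (o+c+G.length) c' + 1 := by
    intro t ht
    have way1 : cnt k t (o+c+G.length) (c' + k)
        = cnt k t (o+c+G.length) c3 + (cnt k t (o+c1) 1 + cnt k t (o+c1+1) c4) := by
      rw [show c' + k = c3 + (1 + c4) from by omega, cnt_add, cnt_add,
        show o+c+G.length+c3 = o+c1 from by omega]
    have way2 : cnt k t (o+c+G.length) (c' + k) = cnt k t (o+c+G.length) c' + 1 := by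
      rw [cnt_add, cnt_k_self k hk t ht]
    rw [cnt_one] at way1
    omega
  refine ⟨(o + c1) % k, Nat.mod_lt _ hk, a, ha, ?_, ?_⟩
  · -- the special residue class
    set ts := (o + c1) % k with hts
    have hy1 : cnt k ts (o+c1+1) c2 = 0 := by
      apply cnt_eq_zero
      intro i hi hcon
      rw [show o+c1+1+i = (o+c1)+(1+i) from by omega] at hcon
      exact mod_add_ne k (1+i) (o+c1) (by omega) (by omega) hcon
    have hGnil : pickMod k ts (o+c) G = [] := by
      apply pickMod_eq_nil
      intro i hi hcon
      have : ((o+c+i) + k) % k = (o+c+i) % k := Nat.add_mod_right _ _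
      rw [show o+c+i+k = (o+c1)+(1+c2+i) from by omega] at this
      rw [← this] at hcon
      exact mod_add_ne k (1+c2+i) (o+c1) (by omega) (by omega) hcon
    have hu1 : cnt k ts (o+c+G.length) c3 = 0 := by
      apply cnt_eq_zero
      intro i hi hcon
      have : (o + c1) % k ≠ (o+c+G.length+i) % k := by
        rw [show o + c1 = (o+c+G.length+i) + (c3 - i) from by omega]
        exact mod_add_ne k (c3 - i) _ (by omega) (by omega)
      exact this hcon.symm
    have hx1 : cnt k ts o c1 = cnt k ts o c := by
      have := W1 ts (Nat.mod_lt _ hk)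
      rw [if_pos rfl, hy1] at this
      omega
    have hv1 : cnt k ts (o+c1+1) c4 = cnt k ts (o+c+G.length) c' := by
      have := W2 ts (Nat.mod_lt _ hk)
      rw [if_pos rfl, hu1] at this
      omega
    rw [comp1, comp2, if_pos hts.symm, if_pos hts.symm, hy1, hGnil, hu1, hx1, hv1]
    simp only [List.nil_append, List.singleton_append, List.replicate_zero]
    refine ⟨cnt k ts o c, by simp, ?_⟩
    rw [List.take_left' (by simp), List.drop_left' (by simp)]
  · -- all other residue classes
    intro t ht hne
    have hne' : ¬ ((o + c1) % k = t) := fun hcon => hne hcon.symm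
    have hGlen : (pickMod k t (o+c) G).length ≤ 1 := by
      rw [pickMod_length]
      exact cnt_le_one k hk t ht _ _ (by omega)
    have hW1 : cnt k t o c1 + cnt k t (o+c1+1) c2 = cnt k t o c + 1 := by
      have := W1 t ht
      rw [if_neg hne'] at this
      omega
    have hW2 : cnt k t (o+c+G.length) c3 + cnt k t (o+c1+1) c4
        = cnt k t (o+c+G.length) c' + 1 := by
      have := W2 t ht
      rw [if_neg hne'] at this
      omega
    rw [comp1, comp2, if_neg hne', if_neg hne']
    simp only [List.nil_append]
    set X := cnt k t o c with hX
    set Y := cnt k t (o+c+G.length) c' with hY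
    set Rp := pickMod k t (o+c+G.length+c') R with hRp
    rcases hGpe : pickMod k t (o+c) G with _ | ⟨g, _ | ⟨g2, gs⟩⟩
    · -- no symbol of G in this class: two adjacent zeros inserted
      left
      simp only [List.nil_append]
      rw [zs_zs (cnt k t (o+c+G.length) c3) (cnt k t (o+c1+1) c4) Rp,
        zs_zs (cnt k t o c1) (cnt k t (o+c1+1) c2) _,
        show cnt k t o c1 + cnt k t (o+c1+1) c2 = X + 1 from by omega,
        show cnt k t (o+c+G.length) c3 + cnt k t (o+c1+1) c4 = Y + 1 from by omega]
      refine ⟨X, by simp, ?_⟩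
      rw [List.take_left' (by simp), List.drop_left' (by simp)]
      have e2 : (0:ZMod q) :: 0 :: (List.replicate Y 0 ++ Rp) = List.replicate (Y+2) 0 ++ Rp := by
        rw [List.replicate_succ, List.replicate_succ, List.cons_append, List.cons_append]
      rw [zs_zs, e2, zs_zs, show X+1+(Y+1) = X+(Y+2) from by omega]
    · -- exactly one symbol of G in this class: two zeros around it
      right
      simp only [List.singleton_append]
      rw [zs_zs (cnt k t (o+c+G.length) c3) (cnt k t (o+c1+1) c4) Rp,
        zs_zs (cnt k t o c1) (cnt k t (o+c1+1) c2) _,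
        show cnt k t o c1 + cnt k t (o+c1+1) c2 = X + 1 from by omega,
        show cnt k t (o+c+G.length) c3 + cnt k t (o+c1+1) c4 = Y + 1 from by omega]
      refine ⟨X, by simp, ?_⟩
      have ht1 : (List.replicate X (0:ZMod q) ++ (g :: (List.replicate Y 0 ++ Rp))).take X
          = List.replicate X 0 := List.take_left' (by simp)
      have ht2 : (List.replicate X (0:ZMod q) ++ (g :: (List.replicate Y 0 ++ Rp))).getD X 0 = g := by
        simpa using getD_append_len (List.replicate X (0:ZMod q)) (List.replicate Y 0 ++ Rp) g
      have ht3 : (List.replicate X (0:ZMod q) ++ (g :: (List.replicate Y 0 ++ Rp))).drop (X+1)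
          = List.replicate Y 0 ++ Rp := by
        simpa using drop_append_len_succ (List.replicate X (0:ZMod q)) (List.replicate Y 0 ++ Rp) g
      rw [ht1, ht2, ht3]
      rw [show X + 1 = X + 1 from rfl, List.replicate_succ' (n := X) (a := (0:ZMod q)),
        List.replicate_succ (a := (0:ZMod q)) (n := Y)]
      simp [List.append_assoc]
    · exfalso
      rw [hGpe] at hGlen
      simp at hGlen


/-! ### chunk 4 : prepending machinery for `ConclO` -/

lemma take_len_add (p : List (ZMod q)) (i : ℕ) :
    ∀ u : List (ZMod q), (p ++ u).take (p.length + i) = p ++ u.take i := by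
  induction p with
  | nil => intro u; simp
  | cons b p ih =>
      intro u
      rw [List.cons_append, List.length_cons,
        show p.length + 1 + i = (p.length + i) + 1 from by omega, List.take_succ_cons, ih]
      rfl

lemma drop_len_add (p : List (ZMod q)) (i : ℕ) :
    ∀ u : List (ZMod q), (p ++ u).drop (p.length + i) = u.drop i := by
  induction p with
  | nil => intro u; simp
  | cons b p ih =>
      intro u
      rw [List.cons_append, List.length_cons,
        show p.length + 1 + i = (p.length + i) + 1 from by omega, List.drop_succ_cons, ih]

lemma getD_len_add (p : List (ZMod q)) (i : ℕ) :
    ∀ u : List (ZMod q), (p ++ u).getD (p.length + i) 0 = u.getD i 0 := by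
  induction p with
  | nil => intro u; simp
  | cons b p ih =>
      intro u
      rw [List.cons_append, List.length_cons,
        show p.length + 1 + i = (p.length + i) + 1 from by omega]
      exact ih u

lemma insPair_prepend (p u w : List (ZMod q)) (b c : ZMod q) (h : insPair u w b c) :
    insPair (p ++ u) (p ++ w) b c := by
  obtain ⟨i, hi, hw⟩ := h
  refine ⟨p.length + i, by rw [List.length_append]; omega, ?_⟩
  rw [take_len_add, drop_len_add, hw, List.append_assoc]

lemma insSpread0_prepend (p u w : List (ZMod q)) (h : insSpread0 u w) :
    insSpread0 (p ++ u) (p ++ w) := by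
  obtain ⟨i, hi, hw⟩ := h
  refine ⟨p.length + i, by rw [List.length_append]; omega, ?_⟩
  rw [take_len_add, getD_len_add, show p.length + i + 1 = p.length + (i + 1) from by omega,
    drop_len_add, hw, List.append_assoc]

lemma ConclO_prepend (k o : ℕ) (p A B : List (ZMod q))
    (h : ConclO k (o + p.length) A B) : ConclO k o (p ++ A) (p ++ B) := by
  obtain ⟨ts, hts, a, ha, hpair, hrest⟩ := h
  refine ⟨ts, hts, a, ha, ?_, ?_⟩
  · rw [pickMod_append, pickMod_append]
    exact insPair_prepend _ _ _ _ _ hpair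
  · intro t ht hne
    rw [pickMod_append, pickMod_append]
    rcases hrest t ht hne with h1 | h1
    · exact Or.inl (insPair_prepend _ _ _ _ _ h1)
    · exact Or.inr (insSpread0_prepend _ _ _ h1)

/-! ### chunk 5 : the effect of a single subtraction on `mu` -/

lemma getD_replicate_lt (m d : ℕ) (hd : d < m) (v : List (ZMod q)) :
    (List.replicate m (0 : ZMod q) ++ v).getD d 0 = 0 := by
  obtain ⟨e, rfl⟩ : ∃ e, m = d + (1 + e) := ⟨m - d - 1, by omega⟩
  have e1 : (List.replicate (d + (1 + e)) (0 : ZMod q) ++ v)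
      = List.replicate d 0 ++ ((0 : ZMod q) :: (List.replicate e 0 ++ v)) := by
    rw [List.replicate_add, List.replicate_add]
    simp
  rw [e1]
  have := getD_len_add (List.replicate d (0 : ZMod q)) 0 ((0 : ZMod q) :: (List.replicate e 0 ++ v))
  simpa using this

lemma set_mid (x : ZMod q) : ∀ (l : List (ZMod q)) (b : ZMod q) (w : List (ZMod q)),
    (l ++ b :: w).set l.length x = l ++ x :: w := by
  intro l
  induction l with
  | nil => intro b w; rfl
  | cons c l ih => intro b w; simp [ih]

lemma set_len_add (x : ZMod q) (i : ℕ) : ∀ (l u : List (ZMod q)),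
    (l ++ u).set (l.length + i) x = l ++ u.set i x := by
  intro l
  induction l with
  | nil => intro u; simp
  | cons c l ih =>
      intro u
      rw [List.cons_append, List.length_cons,
        show l.length + 1 + i = (l.length + i) + 1 from by omega]
      show c :: ((l ++ u).set (l.length + i) x) = _
      rw [ih]
      rfl

lemma set_replicate_lt (m d : ℕ) (hd : d < m) (v : List (ZMod q)) (x : ZMod q) :
    (List.replicate m (0 : ZMod q) ++ v).set d x
      = List.replicate d 0 ++ (x :: (List.replicate (m - d - 1) 0 ++ v)) := by
  obtain ⟨e, rfl⟩ : ∃ e, m = d + (1 + e) := ⟨m - d - 1, by omega⟩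
  simp only [show d + (1 + e) - d - 1 = e from by omega]
  have e1 : (List.replicate (d + (1 + e)) (0 : ZMod q) ++ v)
      = List.replicate d 0 ++ ((0 : ZMod q) :: (List.replicate e 0 ++ v)) := by
    rw [List.replicate_add, List.replicate_add]
    simp
  rw [e1]
  have := set_mid x (List.replicate d (0 : ZMod q)) 0 (List.replicate e 0 ++ v)
  simpa using this

lemma mu_run (k : ℕ) (m : ℕ) (v : List (ZMod q))
    (hv : v = [] ∨ ∃ w s, w ≠ (0 : ZMod q) ∧ v = w :: s) :
    mu k (List.replicate m 0 ++ v) = List.replicate (m % k) 0 ++ mu k v := by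
  rcases hv with rfl | ⟨w, s, hw, rfl⟩
  · have h0 : mu k ([] : List (ZMod q)) = [] := by
      show muAux k 0 ([] : List (ZMod q)) = []
      rw [muAux_nil]
      simp
    rw [List.append_nil, h0, List.append_nil]
    exact mu_zs k m
  · have h0 : mu k (w :: s) = w :: mu k s := by
      show muAux k 0 (w :: s) = _
      rw [muAux_cons_ne k 0 w hw]
      simp [mu]
    rw [mu_zs_cons k m w hw, h0]

lemma mod_sub_cases (k x M : ℕ) (hk : 0 < k) (hx : x % k = M % k) (h2 : x < 2 * k) :
    x = M % k ∨ x = M % k + k := by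
  by_cases h : x < k
  · left; rw [← hx, Nat.mod_eq_of_lt h]
  · right
    have e1 : x % k = (x - k) % k := by
      conv_lhs => rw [show x = (x - k) + k from by omega]
      rw [Nat.add_mod_right]
    have e2 : x - k < k := by omega
    rw [← hx, e1, Nat.mod_eq_of_lt e2]
    omega

lemma subst_cases (k : ℕ) (hk : 0 < k) :
    ∀ d, ∀ (t : List (ZMod q)) (a : ZMod q), a ≠ 0 → d < t.length → d < k →
    (t.getD d 0 = 0 ∧ ∃ P lam rho S,
        (P = [] ∨ ∃ P₀ g, g ≠ (0:ZMod q) ∧ P = P₀ ++ [g]) ∧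
        (S = [] ∨ ∃ w s, w ≠ (0:ZMod q) ∧ S = w :: s) ∧
        P.length + lam = d ∧
        t = P ++ (List.replicate (lam + 1 + rho) 0 ++ S) ∧
        t.set d (t.getD d 0 - a) = P ++ (List.replicate lam 0 ++ ((-a) :: (List.replicate rho 0 ++ S))))
    ∨ (mu k (t.set d (t.getD d 0 - a))).length ≤ (mu k t).length := by
  intro d
  induction d using Nat.strong_induction_on with
  | _ d ih =>
    intro t a ha hdl hdk
    obtain ⟨m, v, rfl, hv⟩ := exists_run t
    by_cases hdm : d < m
    · -- substitution inside the leading zero run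
      left
      have hget : (List.replicate m (0:ZMod q) ++ v).getD d 0 = 0 := getD_replicate_lt m d hdm v
      refine ⟨hget, [], d, m - d - 1, v, Or.inl rfl, hv, by simp, ?_, ?_⟩
      · rw [show d + 1 + (m - d - 1) = m from by omega]
        simp
      · rw [hget, set_replicate_lt m d hdm v, zero_sub]
        simp
    · rcases hv with rfl | ⟨w, t₂, hw, rfl⟩
      · exfalso
        simp only [List.append_nil, List.length_replicate] at hdl
        omega
      · by_cases hdm2 : d = m
        · -- substitution hits the first nonzero symbol `w`
          right
          have hget : (List.replicate m (0:ZMod q) ++ w :: t₂).getD d 0 = w := by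
            rw [hdm2]
            simpa using getD_append_len (List.replicate m (0:ZMod q)) t₂ w
          have hset : (List.replicate m (0:ZMod q) ++ w :: t₂).set d (w - a)
              = List.replicate m 0 ++ (w - a) :: t₂ := by
            rw [hdm2]
            have := set_mid (w - a) (List.replicate m (0:ZMod q)) w t₂
            simpa using this
          rw [hget, hset]
          by_cases hwa : w - a = 0
          · rw [hwa]
            obtain ⟨r2, v2, rfl, hv2⟩ := exists_run t₂
            have e1 : List.replicate m (0:ZMod q) ++ (0:ZMod q) :: (List.replicate r2 0 ++ v2)
                = List.replicate (m + 1 + r2) 0 ++ v2 := by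
              rw [List.replicate_add, List.replicate_add, List.append_assoc, List.append_assoc]
              rfl
            rw [e1, mu_run k _ v2 hv2, mu_zs_cons k m w hw, mu_run k r2 v2 hv2]
            simp only [List.length_append, List.length_cons, List.length_replicate]
            have : (m + 1 + r2) % k ≤ m % k + (1 + r2 % k) := by
              have h1 : (m % k + (1 + r2 % k)) % k = (m + (1 + r2)) % k :=
                Nat.ModEq.add (Nat.mod_modEq m k) (Nat.ModEq.add_left 1 (Nat.mod_modEq r2 k))
              calc (m + 1 + r2) % k = (m % k + (1 + r2 % k)) % k := by
                    rw [h1, Nat.add_assoc]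
                _ ≤ m % k + (1 + r2 % k) := Nat.mod_le _ _
            omega
          · rw [mu_zs_cons k m w hw, mu_zs_cons k m _ hwa]
            simp
        · -- substitution is beyond the first nonzero symbol: recurse
          have hdm3 : m < d := by omega
          set d₂ := d - m - 1 with hd2
          have hlift_set : ∀ x : ZMod q, (List.replicate m (0:ZMod q) ++ w :: t₂).set d x
              = List.replicate m 0 ++ w :: (t₂.set d₂ x) := by
            intro x
            have e0 : List.replicate m (0:ZMod q) ++ w :: t₂
                = (List.replicate m (0:ZMod q) ++ [w]) ++ t₂ := by simp
            have e1 : d = (List.replicate m (0:ZMod q) ++ [w]).length + d₂ := by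
              simp only [List.length_append, List.length_replicate, List.length_cons,
                List.length_nil]
              omega
            rw [e0, e1, set_len_add]
            simp
          have hlift_get : (List.replicate m (0:ZMod q) ++ w :: t₂).getD d 0 = t₂.getD d₂ 0 := by
            have e0 : List.replicate m (0:ZMod q) ++ w :: t₂
                = (List.replicate m (0:ZMod q) ++ [w]) ++ t₂ := by simp
            have e1 : d = (List.replicate m (0:ZMod q) ++ [w]).length + d₂ := by
              simp only [List.length_append, List.length_replicate, List.length_cons,
                List.length_nil]
              omega
            rw [e0, e1, getD_len_add]
          have hd2l : d₂ < t₂.length := by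
            simp only [List.length_append, List.length_replicate, List.length_cons] at hdl
            omega
          rcases ih d₂ (by omega) t₂ a ha hd2l (by omega) with ⟨hz, P, lam, rho, S, hP, hS, hPl, hteq, hseteq⟩ | hN
          · left
            refine ⟨by rw [hlift_get]; exact hz, List.replicate m 0 ++ w :: P, lam, rho, S, ?_, hS, ?_, ?_, ?_⟩
            · rcases hP with rfl | ⟨P₀, g, hg, rfl⟩
              · exact Or.inr ⟨List.replicate m 0, w, hw, by simp⟩
              · exact Or.inr ⟨List.replicate m 0 ++ w :: P₀, g, hg, by simp⟩
            · simp only [List.length_append, List.length_replicate, List.length_cons]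
              omega
            · rw [hteq]; simp
            · rw [hlift_get, hlift_set, hseteq]
              simp
          · right
            rw [hlift_get, hlift_set]
            rw [mu_zs_cons k m w hw, mu_zs_cons k m w hw]
            simpa using hN


/-! ### chunk 6 : the core case analysis -/

lemma take_replicate_append (m i : ℕ) (him : i ≤ m) (v : List (ZMod q)) :
    (List.replicate m (0:ZMod q) ++ v).take i = List.replicate i 0 := by
  rw [show m = i + (m - i) from by omega, List.replicate_add, List.append_assoc,
    List.take_left' (by simp)]

lemma drop_replicate_append (m i : ℕ) (him : i ≤ m) (v : List (ZMod q)) :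
    (List.replicate m (0:ZMod q) ++ v).drop i = List.replicate (m - i) 0 ++ v := by
  rw [show m = i + (m - i) from by omega, List.replicate_add, List.append_assoc,
    List.drop_left' (by simp)]
  simp only [show i + (m - i) - i = m - i from by omega]

lemma take_big (m i : ℕ) (h : m + 1 ≤ i) (w : ZMod q) (t : List (ZMod q)) :
    (List.replicate m (0:ZMod q) ++ w :: t).take i
      = List.replicate m 0 ++ w :: t.take (i - m - 1) := by
  have e0 : List.replicate m (0:ZMod q) ++ w :: t
      = (List.replicate m (0:ZMod q) ++ [w]) ++ t := by simp
  have e1 : i = (List.replicate m (0:ZMod q) ++ [w]).length + (i - m - 1) := by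
    simp only [List.length_append, List.length_replicate, List.length_cons, List.length_nil]
    omega
  conv_lhs => rw [e0, e1]
  rw [take_len_add]
  simp

lemma drop_big (m i : ℕ) (h : m + 1 ≤ i) (w : ZMod q) (t : List (ZMod q)) :
    (List.replicate m (0:ZMod q) ++ w :: t).drop i = t.drop (i - m - 1) := by
  have e0 : List.replicate m (0:ZMod q) ++ w :: t
      = (List.replicate m (0:ZMod q) ++ [w]) ++ t := by simp
  have e1 : i = (List.replicate m (0:ZMod q) ++ [w]).length + (i - m - 1) := by
    simp only [List.length_append, List.length_replicate, List.length_cons, List.length_nil]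
    omega
  conv_lhs => rw [e0, e1]
  rw [drop_len_add]

/-- the noisy duplication at the level of `φ̄` -/
def core' (k i r : ℕ) (a : ZMod q) (z : List (ZMod q)) : List (ZMod q) :=
  z.take i ++ (List.replicate r 0 ++ (a :: (List.replicate (k-1-r) 0 ++
    (z.drop i).set r ((z.drop i).getD r 0 - a))))

theorem core_cases (k : ℕ) (hk : 0 < k) :
    ∀ i, ∀ (z : List (ZMod q)) (r : ℕ) (a : ZMod q) (o : ℕ), a ≠ 0 → r < k → i ≤ z.length →
    (mu k (core' k i r a z)).length = (mu k z).length + 2 * k →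
    ConclO k o (mu k z) (mu k (core' k i r a z)) := by
  intro i
  induction i using Nat.strong_induction_on with
  | _ i ih =>
    intro z r a o ha hr hi hlen
    have hak : -a ≠ 0 := neg_ne_zero.mpr ha
    obtain ⟨m, v, rfl, hv⟩ := exists_run z
    by_cases him : i ≤ m
    · -- insertion point inside the leading zero run
      have htake := take_replicate_append m i him v
      have hdrop := drop_replicate_append m i him v
      by_cases hre : r < m - i
      · -- (2a) the error also falls in the zero run
        have hget : (List.replicate (m-i) (0:ZMod q) ++ v).getD r 0 = 0 :=
          getD_replicate_lt (m-i) r hre v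
        have hset := set_replicate_lt (m-i) r hre v ((0:ZMod q) - a)
        have hz' : core' k i r a (List.replicate m 0 ++ v)
            = List.replicate (i+r) 0 ++ (a :: (List.replicate (k-1) 0 ++
              ((-a) :: (List.replicate (m-i-r-1) 0 ++ v)))) := by
          rw [core', htake, hdrop, hget, hset, zero_sub, zs_zs i r,
            zs_zs (k-1-r) r, show k-1-r+r = k-1 from by omega]
        have hmuz : mu k (List.replicate m 0 ++ v) = List.replicate (m % k) 0 ++ mu k v :=
          mu_run k m v hv
        have hmuz' : mu k (core' k i r a (List.replicate m 0 ++ v))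
            = List.replicate ((i+r)%k) 0 ++ (a :: (List.replicate (k-1) 0 ++
              ((-a) :: (List.replicate ((m-i-r-1)%k) 0 ++ mu k v)))) := by
          rw [hz', mu_zs_cons k (i+r) a ha, mu_zs_cons k (k-1) (-a) hak,
            mu_run k (m-i-r-1) v hv, Nat.mod_eq_of_lt (show k-1 < k from by omega)]
        rw [hmuz, hmuz'] at hlen ⊢
        simp only [List.length_append, List.length_cons, List.length_replicate] at hlen
        have hb1 : (i+r) % k < k := Nat.mod_lt _ hk
        have hb4 : (m-i-r-1) % k < k := Nat.mod_lt _ hk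
        have hbm : m % k < k := Nat.mod_lt _ hk
        have h := extract k hk o 0 (m%k) ((i+r)%k) (k-1-(i+r)%k) ((i+r)%k) ((m-i-r-1)%k)
          ([] : List (ZMod q)) (mu k v) a ha (by omega) (by omega)
          (by simp only [List.length_nil]; omega)
        simp only [List.replicate_zero, List.nil_append] at h
        rwa [zs_zs (k-1-(i+r)%k) ((i+r)%k) _,
          show (k-1-(i+r)%k) + (i+r)%k = k-1 from by omega] at h
      · -- the error position is at or beyond the first symbol after the run
        rcases hv with rfl | ⟨w, t, hw, rfl⟩
        · -- all of z is zeros : impossible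
          exfalso
          simp only [List.append_nil] at htake hdrop hlen
          have hset : (List.replicate (m-i) (0:ZMod q)).set r
              ((List.replicate (m-i) (0:ZMod q)).getD r 0 - a) = List.replicate (m-i) 0 :=
            List.set_eq_of_length_le (by simp only [List.length_replicate]; omega)
          have hz' : core' k i r a (List.replicate m (0:ZMod q))
              = List.replicate (i+r) 0 ++ (a :: List.replicate (k-1-r+(m-i)) 0) := by
            rw [core', htake, hdrop, hset, zs_zs i r,
              show List.replicate (k-1-r) (0:ZMod q) ++ List.replicate (m-i) 0
                = List.replicate (k-1-r+(m-i)) 0 from (List.replicate_add _ _ _).symm]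
          have hmuz : mu k (List.replicate m (0:ZMod q)) = List.replicate (m % k) 0 := mu_zs k m
          have hmuz' : mu k (core' k i r a (List.replicate m (0:ZMod q)))
              = List.replicate ((i+r)%k) 0 ++ (a :: List.replicate ((k-1-r+(m-i))%k) 0) := by
            have h0 : mu k (List.replicate (k-1-r+(m-i)) (0:ZMod q))
                = List.replicate ((k-1-r+(m-i))%k) 0 := mu_zs k _
            calc mu k (core' k i r a (List.replicate m (0:ZMod q)))
                = mu k (List.replicate (i+r) 0 ++ (a :: List.replicate (k-1-r+(m-i)) 0)) := by
                  rw [hz']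
              _ = List.replicate ((i+r)%k) 0 ++ (a :: mu k (List.replicate (k-1-r+(m-i)) 0)) :=
                  mu_zs_cons k (i+r) a ha _
              _ = List.replicate ((i+r)%k) 0 ++ (a :: List.replicate ((k-1-r+(m-i))%k) 0) := by
                  rw [h0]
          rw [hmuz, hmuz'] at hlen
          simp only [List.length_append, List.length_cons, List.length_replicate,
            List.length_nil] at hlen
          have hb1 : (i+r) % k < k := Nat.mod_lt _ hk
          have hb2 : (k-1-r+(m-i)) % k < k := Nat.mod_lt _ hk
          omega
        · -- v = w :: t with w ≠ 0
          by_cases hre2 : r = m - i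
          · -- the error hits `w`
            have hget : (List.replicate (m-i) (0:ZMod q) ++ w :: t).getD r 0 = w := by
              rw [hre2]
              simpa using getD_append_len (List.replicate (m-i) (0:ZMod q)) t w
            have hset : (List.replicate (m-i) (0:ZMod q) ++ w :: t).set r (w - a)
                = List.replicate (m-i) 0 ++ (w - a) :: t := by
              rw [hre2]
              simpa using set_mid (w - a) (List.replicate (m-i) (0:ZMod q)) w t
            have hz' : core' k i r a (List.replicate m 0 ++ w :: t)
                = List.replicate (i+r) 0 ++ (a :: (List.replicate (k-1) 0 ++ ((w-a) :: t))) := by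
              rw [core', htake, hdrop, hget, hset, zs_zs i r, zs_zs (k-1-r) (m-i),
                show k-1-r+(m-i) = k-1 from by omega]
            have hmuz : mu k (List.replicate m 0 ++ w :: t)
                = List.replicate (m % k) 0 ++ w :: mu k t := mu_zs_cons k m w hw t
            by_cases hwa : w - a = 0
            · exfalso
              obtain ⟨r2, v2, ht2, hv2⟩ := exists_run t
              have hz'' : core' k i r a (List.replicate m 0 ++ w :: t)
                  = List.replicate (i+r) 0 ++ (a :: (List.replicate (k+r2) 0 ++ v2)) := by
                rw [hz', hwa, ht2]
                congr 1
                rw [show k + r2 = (k-1) + (1 + r2) from by omega, List.replicate_add,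
                  List.replicate_add, List.append_assoc, List.append_assoc]
                rfl
              have hmuz' : mu k (core' k i r a (List.replicate m 0 ++ w :: t))
                  = List.replicate ((i+r)%k) 0 ++ (a :: (List.replicate ((k+r2)%k) 0 ++ mu k v2)) := by
                rw [hz'', mu_zs_cons k (i+r) a ha, mu_run k (k+r2) v2 hv2]
              have hmut : mu k t = List.replicate (r2 % k) 0 ++ mu k v2 := by
                rw [ht2]; exact mu_run k r2 v2 hv2
              rw [hmuz, hmuz', hmut, Nat.add_mod_left] at hlen
              simp only [List.length_append, List.length_cons, List.length_replicate] at hlen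
              have hb1 : (i+r) % k < k := Nat.mod_lt _ hk
              omega
            · exfalso
              have hmuz' : mu k (core' k i r a (List.replicate m 0 ++ w :: t))
                  = List.replicate ((i+r)%k) 0 ++ (a :: (List.replicate (k-1) 0 ++
                    ((w-a) :: mu k t))) := by
                rw [hz', mu_zs_cons k (i+r) a ha, mu_zs_cons k (k-1) (w-a) hwa,
                  Nat.mod_eq_of_lt (show k-1 < k from by omega)]
              rw [hmuz, hmuz'] at hlen
              simp only [List.length_append, List.length_cons, List.length_replicate] at hlen
              have hb1 : (i+r) % k < k := Nat.mod_lt _ hk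
              omega
          · -- the error is strictly beyond `w`
            have hre3 : m - i < r := by omega
            have e0 : List.replicate (m-i) (0:ZMod q) ++ w :: t
                = (List.replicate (m-i) (0:ZMod q) ++ [w]) ++ t := by simp
            have e1 : r = (List.replicate (m-i) (0:ZMod q) ++ [w]).length + (r-(m-i)-1) := by
              simp only [List.length_append, List.length_replicate, List.length_cons,
                List.length_nil]
              omega
            have hlift_get : (List.replicate (m-i) (0:ZMod q) ++ w :: t).getD r 0
                = t.getD (r-(m-i)-1) 0 := by
              conv_lhs => rw [e0, e1]
              rw [getD_len_add]
            have hlift_set : ∀ x : ZMod q, (List.replicate (m-i) (0:ZMod q) ++ w :: t).set r x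
                = List.replicate (m-i) 0 ++ w :: (t.set (r-(m-i)-1) x) := by
              intro x
              conv_lhs => rw [e0, e1]
              rw [set_len_add]
              simp
            by_cases hd : r-(m-i)-1 < t.length
            · rcases subst_cases k hk (r-(m-i)-1) t a ha hd (by omega) with
                ⟨hz0, P, lam, rho, S, hP, hS, hPl, hteq, hseteq⟩ | hN
              · -- the only possible configuration: apply `extract`
                have hz' : core' k i r a (List.replicate m 0 ++ w :: t)
                    = List.replicate (i+r) 0 ++ (a :: (List.replicate (k-1-r+(m-i)) 0 ++
                      (w :: (P ++ (List.replicate lam 0 ++ ((-a) :: (List.replicate rho 0 ++ S))))))) := by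
                  rw [core', htake, hdrop, hlift_get, hlift_set, hseteq, zs_zs i r,
                    zs_zs (k-1-r) (m-i)]
                have hPk : P.length < k := by omega
                have hlamk : lam < k := by omega
                have hmut : mu k t = P ++ (List.replicate ((lam+1+rho)%k) 0 ++ mu k S) := by
                  rw [hteq, mu_short_prepend k P.length P _ rfl hPk hP, mu_run k _ S hS]
                have hmut' : mu k (t.set (r-(m-i)-1) (t.getD (r-(m-i)-1) 0 - a))
                    = P ++ (List.replicate lam 0 ++ ((-a) :: (List.replicate (rho%k) 0 ++ mu k S))) := by
                  rw [hseteq, mu_short_prepend k P.length P _ rfl hPk hP,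
                    mu_zs_cons k lam (-a) hak, mu_run k rho S hS, Nat.mod_eq_of_lt hlamk]
                have hmuz : mu k (List.replicate m 0 ++ w :: t)
                    = List.replicate (m % k) 0 ++ w :: (P ++ (List.replicate ((lam+1+rho)%k) 0 ++ mu k S)) := by
                  rw [mu_zs_cons k m w hw, hmut]
                have hmuz' : mu k (core' k i r a (List.replicate m 0 ++ w :: t))
                    = List.replicate ((i+r)%k) 0 ++ (a :: (List.replicate (k-1-r+(m-i)) 0 ++
                      (w :: (P ++ (List.replicate lam 0 ++ ((-a) :: (List.replicate (rho%k) 0 ++ mu k S))))))) := by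
                  rw [hz', mu_zs_cons k (i+r) a ha,
                    mu_zs_cons k (k-1-r+(m-i)) w hw,
                    Nat.mod_eq_of_lt (show k-1-r+(m-i) < k from by omega),
                    mu_short_prepend k P.length P _ rfl hPk hP,
                    mu_zs_cons k lam (-a) hak, mu_run k rho S hS, Nat.mod_eq_of_lt hlamk]
                rw [hmuz, hmuz'] at hlen ⊢
                simp only [List.length_append, List.length_cons, List.length_replicate] at hlen
                have hb1 : (i+r) % k < k := Nat.mod_lt _ hk
                have hbm : m % k < k := Nat.mod_lt _ hk
                have hbr : rho % k < k := Nat.mod_lt _ hk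
                have hbl : (lam+1+rho) % k < k := Nat.mod_lt _ hk
                have f1 : ((i+r)%k + (k-1-r+(m-i)) + 1) % k = m % k := by
                  rw [Nat.add_assoc, Nat.mod_add_mod,
                    show i+r+(k-1-r+(m-i)+1) = m + k from by omega, Nat.add_mod_right]
                have f2 : (lam + rho%k + 1) % k = (lam+1+rho) % k := by
                  rw [show lam + rho%k + 1 = (lam+1) + rho%k from by omega, Nat.add_mod_mod,
                    show lam+1+rho = lam + 1 + rho from rfl]
                have g1 := mod_sub_cases k ((i+r)%k + (k-1-r+(m-i)) + 1) m hk f1 (by omega)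
                have g2 := mod_sub_cases k (lam + rho%k + 1) (lam+1+rho) hk f2 (by omega)
                have h1 : (i+r)%k + (k-1-r+(m-i)) + 1 = m%k + k := by omega
                have h2 : lam + rho%k + 1 = (lam+1+rho)%k + k := by omega
                have h := extract k hk o (m%k) ((lam+1+rho)%k) ((i+r)%k) (k-1-r+(m-i))
                  lam (rho%k) (w :: P) (mu k S) a ha h1 h2
                  (by simp only [List.length_cons]; omega)
                simpa only [List.cons_append, List.append_assoc] using h
              · -- impossible by length count
                exfalso
                have hz' : core' k i r a (List.replicate m 0 ++ w :: t)
                    = List.replicate (i+r) 0 ++ (a :: (List.replicate (k-1-r+(m-i)) 0 ++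
                      (w :: t.set (r-(m-i)-1) (t.getD (r-(m-i)-1) 0 - a)))) := by
                  rw [core', htake, hdrop, hlift_get, hlift_set, zs_zs i r,
                    zs_zs (k-1-r) (m-i)]
                have hmuz' : mu k (core' k i r a (List.replicate m 0 ++ w :: t))
                    = List.replicate ((i+r)%k) 0 ++ (a :: (List.replicate (k-1-r+(m-i)) 0 ++
                      (w :: mu k (t.set (r-(m-i)-1) (t.getD (r-(m-i)-1) 0 - a))))) := by
                  rw [hz', mu_zs_cons k (i+r) a ha, mu_zs_cons k (k-1-r+(m-i)) w hw,
                    Nat.mod_eq_of_lt (show k-1-r+(m-i) < k from by omega)]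
                have hmuz : mu k (List.replicate m 0 ++ w :: t)
                    = List.replicate (m % k) 0 ++ w :: mu k t := mu_zs_cons k m w hw t
                rw [hmuz, hmuz'] at hlen
                simp only [List.length_append, List.length_cons, List.length_replicate] at hlen
                have hb1 : (i+r) % k < k := Nat.mod_lt _ hk
                omega
            · -- the error falls beyond the end of the string
              exfalso
              have hset : (List.replicate (m-i) (0:ZMod q) ++ w :: t).set r
                  ((List.replicate (m-i) (0:ZMod q) ++ w :: t).getD r 0 - a)
                  = List.replicate (m-i) 0 ++ w :: t :=
                List.set_eq_of_length_le (by
                  simp only [List.length_append, List.length_replicate, List.length_cons]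
                  omega)
              have hz' : core' k i r a (List.replicate m 0 ++ w :: t)
                  = List.replicate (i+r) 0 ++ (a :: (List.replicate (k-1-r+(m-i)) 0 ++
                    (w :: t))) := by
                rw [core', htake, hdrop, hset, zs_zs i r, zs_zs (k-1-r) (m-i)]
              have hmuz' : mu k (core' k i r a (List.replicate m 0 ++ w :: t))
                  = List.replicate ((i+r)%k) 0 ++ (a :: (List.replicate (k-1-r+(m-i)) 0 ++
                    (w :: mu k t))) := by
                rw [hz', mu_zs_cons k (i+r) a ha, mu_zs_cons k (k-1-r+(m-i)) w hw,
                  Nat.mod_eq_of_lt (show k-1-r+(m-i) < k from by omega)]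
              have hmuz : mu k (List.replicate m 0 ++ w :: t)
                  = List.replicate (m % k) 0 ++ w :: mu k t := mu_zs_cons k m w hw t
              rw [hmuz, hmuz'] at hlen
              simp only [List.length_append, List.length_cons, List.length_replicate] at hlen
              have hb1 : (i+r) % k < k := Nat.mod_lt _ hk
              omega
    · -- strip the leading run and recurse
      rcases hv with rfl | ⟨w, t, hw, rfl⟩
      · exfalso
        simp only [List.append_nil, List.length_replicate] at hi
        omega
      · have him2 : m + 1 ≤ i := by omega
        have htake := take_big m i him2 w t
        have hdrop := drop_big m i him2 w t
        have hz' : core' k i r a (List.replicate m 0 ++ w :: t)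
            = List.replicate m 0 ++ w :: core' k (i-m-1) r a t := by
          rw [core', htake, hdrop, core']
          simp [List.append_assoc]
        have hmuz : mu k (List.replicate m 0 ++ w :: t)
            = List.replicate (m % k) 0 ++ w :: mu k t := mu_zs_cons k m w hw t
        have hmuz' : mu k (core' k i r a (List.replicate m 0 ++ w :: t))
            = List.replicate (m % k) 0 ++ w :: mu k (core' k (i-m-1) r a t) := by
          rw [hz', mu_zs_cons k m w hw]
        have hi2 : i - m - 1 ≤ t.length := by
          simp only [List.length_append, List.length_replicate, List.length_cons] at hi
          omega
        have hlen2 : (mu k (core' k (i-m-1) r a t)).length = (mu k t).length + 2 * k := by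
          rw [hmuz, hmuz'] at hlen
          simp only [List.length_append, List.length_cons, List.length_replicate] at hlen
          omega
        have IH := ih (i-m-1) (by omega) t r a (o + (m % k + 1)) ha hr hi2 hlen2
        have hp : (List.replicate (m % k) (0:ZMod q) ++ [w]).length = m % k + 1 := by simp
        have h2 := ConclO_prepend k o (List.replicate (m % k) 0 ++ [w]) _ _ (by rw [hp]; exact IH)
        rw [hmuz, hmuz']
        simpa only [List.append_assoc, List.singleton_append] using h2


/-! ### chunk 7 : getD toolkit and `barPhi` under duplication / noise -/

lemma ext_getD : ∀ (L1 L2 : List (ZMod q)), L1.length = L2.length →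
    (∀ t, t < L1.length → L1.getD t 0 = L2.getD t 0) → L1 = L2 := by
  intro L1
  induction L1 with
  | nil => intro L2 h _; exact (List.length_eq_zero_iff.mp h.symm).symm ▸ rfl
  | cons b L1 ih =>
      intro L2 h hD
      cases L2 with
      | nil => simp at h
      | cons c L2 =>
          have hb : b = c := by simpa using hD 0 (by simp)
          have ht : L1 = L2 := by
            apply ih
            · simpa using h
            · intro t htl
              simpa using hD (t+1) (by simp; omega)
          rw [hb, ht]

lemma getD_append_lt (p u : List (ZMod q)) : ∀ s, s < p.length → (p ++ u).getD s 0 = p.getD s 0 := by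
  induction p with
  | nil => intro s h; simp at h
  | cons b p ih =>
      intro s h
      cases s with
      | zero => rfl
      | succ s => simpa using ih s (by simpa using h)

lemma getD_take (u : List (ZMod q)) : ∀ (n s : ℕ), s < n → (u.take n).getD s 0 = u.getD s 0 := by
  induction u with
  | nil => intro n s _; simp
  | cons b u ih =>
      intro n s h
      cases n with
      | zero => omega
      | succ n =>
          cases s with
          | zero => rfl
          | succ s => simpa using ih n s (by omega)

lemma getD_drop (u : List (ZMod q)) : ∀ (n s : ℕ), (u.drop n).getD s 0 = u.getD (n + s) 0 := by
  induction u with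
  | nil => intro n s; simp
  | cons b u ih =>
      intro n s
      cases n with
      | zero => simp
      | succ n =>
          rw [List.drop_succ_cons, ih n s, show n + 1 + s = (n + s) + 1 from by omega]
          rfl

lemma getD_set_self (l : List (ZMod q)) : ∀ (p : ℕ), p < l.length → ∀ x, (l.set p x).getD p 0 = x := by
  induction l with
  | nil => intro p h; simp at h
  | cons b l ih =>
      intro p h x
      cases p with
      | zero => rfl
      | succ p => simpa using ih p (by simpa using h) x

lemma getD_set_ne (l : List (ZMod q)) : ∀ (p s : ℕ), p ≠ s → ∀ x, (l.set p x).getD s 0 = l.getD s 0 := by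
  induction l with
  | nil => intro p s _ x; simp
  | cons b l ih =>
      intro p s h x
      cases p with
      | zero =>
          cases s with
          | zero => omega
          | succ s => rfl
      | succ p =>
          cases s with
          | zero => rfl
          | succ s => simpa using ih p s (by omega) x

lemma barPhi_length (k : ℕ) (x : List (ZMod q)) : (barPhi k x).length = x.length - k := by
  simp [barPhi]

lemma barPhi_getD (k : ℕ) (x : List (ZMod q)) (t : ℕ) (h : t < x.length - k) :
    (barPhi k x).getD t 0 = x.getD (t+k) 0 - x.getD t 0 := by
  rw [barPhi, List.getD_eq_getElem _ _ (by simpa using h)]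
  simp

lemma dup_eq (k i : ℕ) (u : List (ZMod q)) (h : i + k ≤ u.length) :
    dup i k u = u.take (i+k) ++ u.drop i := by
  rw [dup, if_pos h, ← List.take_add]

lemma dup_length (k i : ℕ) (u : List (ZMod q)) (h : i + k ≤ u.length) :
    (dup i k u).length = u.length + k := by
  rw [dup_eq k i u h]
  simp only [List.length_append, List.length_take, List.length_drop]
  omega

lemma dup_getD (k i : ℕ) (u : List (ZMod q)) (h : i + k ≤ u.length) (s : ℕ) (hs : s < u.length + k) :
    (dup i k u).getD s 0 = if s < i + k then u.getD s 0 else u.getD (s - k) 0 := by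
  rw [dup_eq k i u h]
  by_cases hsk : s < i + k
  · rw [if_pos hsk, getD_append_lt _ _ s (by simp only [List.length_take]; omega),
      getD_take u (i+k) s hsk]
  · rw [if_neg hsk]
    have e1 := getD_len_add (u.take (i+k)) (s - (i+k)) (u.drop i)
    rw [show (u.take (i+k)).length + (s - (i+k)) = s from by
      simp only [List.length_take]; omega] at e1
    rw [e1, getD_drop]
    congr 1
    omega

lemma barPhi_dup (k i : ℕ) (u : List (ZMod q)) (h : i + k ≤ u.length) :
    barPhi k (dup i k u)
      = (barPhi k u).take i ++ (List.replicate k 0 ++ (barPhi k u).drop i) := by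
  have hBl : (barPhi k u).length = u.length - k := barPhi_length k u
  have hil : i ≤ (barPhi k u).length := by omega
  apply ext_getD
  · rw [barPhi_length, dup_length k i u h]
    simp only [List.length_append, List.length_take, List.length_replicate, List.length_drop]
    omega
  · intro t ht
    rw [barPhi_length, dup_length k i u h] at ht
    have htu : t < u.length := by omega
    rw [barPhi_getD k _ t (by rw [dup_length k i u h]; omega),
      dup_getD k i u h (t+k) (by omega), dup_getD k i u h t (by omega)]
    by_cases h1 : t < i
    · rw [if_pos (show t + k < i + k from by omega), if_pos (show t < i + k from by omega),
        getD_append_lt _ _ t (by simp only [List.length_take]; omega),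
        getD_take _ i t h1, barPhi_getD k u t (by omega)]
    · have e1 := getD_len_add ((barPhi k u).take i) (t - i)
        (List.replicate k 0 ++ (barPhi k u).drop i)
      rw [show ((barPhi k u).take i).length + (t - i) = t from by
        simp only [List.length_take]; omega] at e1
      rw [e1]
      by_cases h2 : t < i + k
      · rw [if_neg (show ¬ t + k < i + k from by omega), if_pos h2,
          show t + k - k = t from by omega,
          getD_append_lt _ _ (t - i) (by simp only [List.length_replicate]; omega)]
        rw [sub_self]
        have : ∀ s m, (List.replicate m (0:ZMod q)).getD s 0 = 0 := by
          intro s m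
          induction m generalizing s with
          | zero => simp
          | succ m ih =>
              cases s with
              | zero => rfl
              | succ s => simpa [List.replicate_succ] using ih s
        rw [this]
      · have e2 := getD_len_add (List.replicate k (0:ZMod q)) (t - i - k) ((barPhi k u).drop i)
        rw [show (List.replicate k (0:ZMod q)).length + (t - i - k) = t - i from by
          simp only [List.length_replicate]; omega] at e2
        rw [if_neg (show ¬ t + k < i + k from by omega), if_neg (show ¬ t < i + k from by omega),
          e2, getD_drop, show i + (t - i - k) = t - k from by omega,
          barPhi_getD k u (t-k) (by omega), show t - k + k = t from by omega,
          show t + k - k = t from by omega]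

lemma barPhi_noisy (k i r : ℕ) (hk : 0 < k) (u : List (ZMod q)) (a : ZMod q)
    (hik : i + k ≤ u.length) (hr : r < k) :
    barPhi k (addAt (dup i k u) (i + k + r) a) = core' k i r a (barPhi k u) := by
  have hBl : (barPhi k u).length = u.length - k := barPhi_length k u
  have hvl : (addAt (dup i k u) (i+k+r) a).length = u.length + k := by
    rw [addAt, List.length_set, dup_length k i u hik]
  have hrepl : ∀ (s m : ℕ), (List.replicate m (0:ZMod q)).getD s 0 = 0 := by
    intro s m
    induction m generalizing s with
    | zero => simp
    | succ m ih =>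
        cases s with
        | zero => rfl
        | succ s => simpa [List.replicate_succ] using ih s
  have hvD : ∀ s, s < u.length + k → (addAt (dup i k u) (i+k+r) a).getD s 0 =
      if s = i+k+r then u.getD (i+r) 0 + a
      else if s < i + k then u.getD s 0 else u.getD (s - k) 0 := by
    intro s hs
    by_cases hsp : s = i + k + r
    · rw [if_pos hsp, addAt, hsp, getD_set_self _ _ (by rw [dup_length k i u hik]; omega) _,
        dup_getD k i u hik (i+k+r) (by omega), if_neg (show ¬ i+k+r < i+k from by omega),
        show i+k+r-k = i+r from by omega]
    · rw [if_neg hsp, addAt, getD_set_ne _ _ _ (fun hcon => hsp hcon.symm) _,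
        dup_getD k i u hik s hs]
  apply ext_getD
  · rw [barPhi_length, hvl, core']
    simp only [List.length_append, List.length_take, List.length_cons, List.length_replicate,
      List.length_set, List.length_drop]
    omega
  · intro t ht
    rw [barPhi_length, hvl] at ht
    have htu : t < u.length := by omega
    rw [barPhi_getD k _ t (by rw [hvl]; omega), hvD (t+k) (by omega), hvD t (by omega)]
    rw [core']
    by_cases h1 : t < i
    · rw [if_neg (show ¬ t + k = i+k+r from by omega), if_neg (show ¬ t = i+k+r from by omega),
        if_pos (show t + k < i + k from by omega), if_pos (show t < i + k from by omega),
        getD_append_lt _ _ t (by simp only [List.length_take]; omega),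
        getD_take _ i t h1, barPhi_getD k u t (by omega)]
    · have e1 := getD_len_add ((barPhi k u).take i) (t - i)
        (List.replicate r 0 ++ (a :: (List.replicate (k-1-r) 0 ++
          ((barPhi k u).drop i).set r (((barPhi k u).drop i).getD r 0 - a))))
      rw [show (((barPhi k u)).take i).length + (t - i) = t from by
        simp only [List.length_take]; omega] at e1
      rw [e1]
      by_cases h2 : t < i + r
      · rw [if_neg (show ¬ t + k = i+k+r from by omega), if_neg (show ¬ t = i+k+r from by omega),
          if_neg (show ¬ t + k < i + k from by omega), if_pos (show t < i + k from by omega),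
          show t + k - k = t from by omega, sub_self,
          getD_append_lt _ _ (t - i) (by simp only [List.length_replicate]; omega), hrepl]
      · by_cases h3 : t = i + r
        · rw [if_pos (show t + k = i+k+r from by omega), if_neg (show ¬ t = i+k+r from by omega),
            if_pos (show t < i + k from by omega)]
          have e2 := getD_len_add (List.replicate r (0:ZMod q)) 0
            (a :: (List.replicate (k-1-r) 0 ++
              ((barPhi k u).drop i).set r (((barPhi k u).drop i).getD r 0 - a)))
          rw [show (List.replicate r (0:ZMod q)).length + 0 = t - i from by
            simp only [List.length_replicate]; omega] at e2
          rw [e2, show t = i + r from h3]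
          show u.getD (i+r) 0 + a - u.getD (i+r) 0 = a
          ring
        · by_cases h4 : t < i + k
          · rw [if_neg (show ¬ t + k = i+k+r from by omega),
              if_neg (show ¬ t = i+k+r from by omega),
              if_neg (show ¬ t + k < i + k from by omega),
              if_pos (show t < i + k from by omega),
              show t + k - k = t from by omega, sub_self]
            have e2 := getD_len_add (List.replicate r (0:ZMod q)) (t - i - r)
              (a :: (List.replicate (k-1-r) 0 ++
                ((barPhi k u).drop i).set r (((barPhi k u).drop i).getD r 0 - a)))
            rw [show (List.replicate r (0:ZMod q)).length + (t - i - r) = t - i from by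
              simp only [List.length_replicate]; omega] at e2
            rw [e2, show t - i - r = (t - i - r - 1) + 1 from by omega]
            show (0:ZMod q) = (List.replicate (k-1-r) (0:ZMod q) ++
              ((barPhi k u).drop i).set r (((barPhi k u).drop i).getD r 0 - a)).getD (t-i-r-1) 0
            rw [getD_append_lt _ _ _ (by simp only [List.length_replicate]; omega), hrepl]
          · have e2 := getD_len_add (List.replicate r (0:ZMod q)) (t - i - r)
              (a :: (List.replicate (k-1-r) 0 ++
                ((barPhi k u).drop i).set r (((barPhi k u).drop i).getD r 0 - a)))
            rw [show (List.replicate r (0:ZMod q)).length + (t - i - r) = t - i from by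
              simp only [List.length_replicate]; omega] at e2
            have e4 := getD_len_add (List.replicate (k-1-r) (0:ZMod q)) (t - i - k)
              (((barPhi k u).drop i).set r (((barPhi k u).drop i).getD r 0 - a))
            rw [show (List.replicate (k-1-r) (0:ZMod q)).length + (t - i - k) = t - i - r - 1 from by
              simp only [List.length_replicate]; omega] at e4
            have e5 : (List.replicate r (0:ZMod q) ++ (a :: (List.replicate (k-1-r) 0 ++
                ((barPhi k u).drop i).set r (((barPhi k u).drop i).getD r 0 - a)))).getD (t - i) 0
                = (((barPhi k u).drop i).set r
                    (((barPhi k u).drop i).getD r 0 - a)).getD (t - i - k) 0 := by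
              rw [e2, show t - i - r = (t - i - r - 1) + 1 from by omega]
              show (List.replicate (k-1-r) (0:ZMod q) ++
                ((barPhi k u).drop i).set r (((barPhi k u).drop i).getD r 0 - a)).getD (t-i-r-1) 0 = _
              rw [e4]
            by_cases h5 : t = i + k + r
            · rw [if_neg (show ¬ t + k = i+k+r from by omega),
                if_pos (show t = i+k+r from h5),
                if_neg (show ¬ t + k < i + k from by omega),
                show t + k - k = t from by omega, e5,
                show t - i - k = r from by omega,
                getD_set_self _ r (by simp only [List.length_drop]; omega) _,
                getD_drop, barPhi_getD k u (i+r) (by omega),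
                show t = i + k + r from h5]
              rw [show i + r + k = i + k + r from by omega]
              ring
            · rw [if_neg (show ¬ t + k = i+k+r from by omega),
                if_neg (show ¬ t = i+k+r from h5),
                if_neg (show ¬ t + k < i + k from by omega),
                if_neg (show ¬ t < i + k from by omega), e5,
                getD_set_ne _ r (t - i - k) (by omega) _, getD_drop,
                show i + (t - i - k) = t - k from by omega, barPhi_getD k u (t-k) (by omega),
                show t - k + k = t from by omega, show t + k - k = t from by omega]

/-! ### chunk 8 : putting everything together -/

lemma mu_barPhi_step (k : ℕ) (u y : List (ZMod q)) (h : ExactStep k u y) :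
    mu k (barPhi k y) = mu k (barPhi k u) := by
  obtain ⟨i, hik, rfl⟩ := h
  rw [barPhi_dup k i u hik, ← List.append_assoc, mu_insert_zs, List.take_append_drop]

lemma mu_barPhi_desc (k : ℕ) (u y : List (ZMod q)) (h : ExactDesc k u y) :
    mu k (barPhi k y) = mu k (barPhi k u) := by
  induction h with
  | refl => rfl
  | tail _ hstep ih => rw [mu_barPhi_step k _ _ hstep, ih]

lemma conclO_to_final (k : ℕ) (hk : 0 < k) (μ μ'' : List (ZMod q)) (h : ConclO k 0 μ μ'') :
    ∃ js ∈ Finset.Icc 1 k, ∃ a : ZMod q, a ≠ 0 ∧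
      insPair (splitk k js μ) (splitk k js μ'') a (-a) ∧
      ∀ j ∈ Finset.Icc 1 k, j ≠ js →
        (insPair (splitk k j μ) (splitk k j μ'') 0 0 ∨
         insSpread0 (splitk k j μ) (splitk k j μ'')) := by
  obtain ⟨ts, hts, a, ha, hpair, hrest⟩ := h
  refine ⟨ts + 1, by simp only [Finset.mem_Icc]; omega, a, ha, ?_, ?_⟩
  · rw [splitk_eq_pickMod, splitk_eq_pickMod]
    simpa using hpair
  · intro j hj hne
    simp only [Finset.mem_Icc] at hj
    rw [splitk_eq_pickMod, splitk_eq_pickMod]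
    exact hrest (j-1) (by omega) (fun hcon => hne (by omega))


/-- if the `μ`-root grows by `2k`, then one subsequence gets an
adjacent pair `a, -a` (with `a ≠ 0`) inserted, and every other subsequence gets
two `0`s inserted that are adjacent or separated by exactly one symbol. -/
theorem root_change_plus_2k
    (q k n : ℕ) (hq : 2 ≤ q) (hk : 1 ≤ k) (hn : 2 * k < n)
    (x : List (ZMod q)) (hx : x.length = n) (hirr : IsIrreducible k x)
    (x'' : List (ZMod q)) (hdesc : x'' ∈ descCone k x)
    (hlen : (mu k (barPhi k x'')).length = (mu k (barPhi k x)).length + 2 * k) :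
    ∃ js ∈ Finset.Icc 1 k, ∃ a : ZMod q, a ≠ 0 ∧
      insPair (splitk k js (mu k (barPhi k x)))
        (splitk k js (mu k (barPhi k x''))) a (-a) ∧
      ∀ j ∈ Finset.Icc 1 k, j ≠ js →
        (insPair (splitk k j (mu k (barPhi k x)))
            (splitk k j (mu k (barPhi k x''))) 0 0 ∨
         insSpread0 (splitk k j (mu k (barPhi k x)))
            (splitk k j (mu k (barPhi k x'')))) := by
  have hk0 : 0 < k := hk
  rcases hdesc with hex | ⟨u, v, hxu, hstep, hvx''⟩
  · exfalso
    rw [mu_barPhi_desc k x x'' hex] at hlen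
    omega
  · obtain ⟨i, a, j, hik, ha, hj1, hj2, hv⟩ := hstep
    obtain ⟨r, hjr, hrk⟩ : ∃ r, j - 1 = i + k + r ∧ r < k := ⟨j - 1 - (i + k), by omega, by omega⟩
    have h1 : mu k (barPhi k u) = mu k (barPhi k x) := mu_barPhi_desc k x u hxu
    have h2 : mu k (barPhi k x'') = mu k (core' k i r a (barPhi k u)) := by
      rw [mu_barPhi_desc k v x'' hvx'', hv, hjr, barPhi_noisy k i r hk0 u a hik hrk]
    have hi_le : i ≤ (barPhi k u).length := by rw [barPhi_length]; omega
    have hlen' : (mu k (core' k i r a (barPhi k u))).length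
        = (mu k (barPhi k u)).length + 2 * k := by
      rw [← h2, hlen, h1]
    have hconcl := core_cases k hk0 i (barPhi k u) r a 0 ha hrk hi_le hlen'
    rw [h1, ← h2] at hconcl
    exact conclO_to_final k hk0 _ _ hconcl

end NoisyDup
end

section
/- Let q ≥ 2, let v ∈ Σ_q^m with m ≥ 1, let p ∈ {1,…,m}, let c = v_p, and let a ∈ Σ_q. Let w ∈ Σ_q^{m+1} be the string obtained from v by replacing the single symbol c at position p by the two adjacent symbols a, (c − a mod q). Then cusum(w) is obtained from cusum(v) by inserting the single symbol (v₁ + ⋯ + v_{p−1} + a mod q) immediately after position p − 1; in particular, replacing a symbol by two symbols summing to it turns into a single symbol insertion under the cumulative-sum map. -/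
open List

namespace NoisyDup

variable {q : ℕ}

lemma cusum_cons (b : ZMod q) (t : List (ZMod q)) :
    cusum (b :: t) = b :: (cusum t).map (b + ·) := by
  simp only [cusum, List.length_cons, List.range_succ_eq_map, List.map_cons, List.map_map]
  simp [List.take_succ_cons, Function.comp]

lemma cusum_append (x y : List (ZMod q)) :
    cusum (x ++ y) = cusum x ++ (cusum y).map (x.sum + ·) := by
  induction x with
  | nil => simp [cusum]
  | cons b x ih =>
    simp only [List.cons_append, cusum_cons, ih, List.map_append, List.map_map, List.sum_cons]
    refine congrArg _ (congrArg _ (List.map_congr_left fun z _ => ?_))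
    simp [Function.comp, add_assoc]

lemma cusum_length (x : List (ZMod q)) : (cusum x).length = x.length := by
  simp [cusum]

/-- replacing the symbol `c = v_p` by the two adjacent symbols
`a, c - a` turns, under the cumulative-sum map, into the insertion of the single
symbol `v₁ + ⋯ + v_{p-1} + a` immediately after position `p - 1`. -/
theorem cusum_of_split_symbol
    (q m : ℕ) (hq : 2 ≤ q) (hm : 1 ≤ m)
    (v : List (ZMod q)) (hv : v.length = m)
    (p : ℕ) (hp1 : 1 ≤ p) (hp2 : p ≤ m) (a : ZMod q) :
    cusum (v.take (p - 1) ++ a :: (v.getD (p - 1) 0 - a) :: v.drop p) =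
      (cusum v).take (p - 1) ++ ((v.take (p - 1)).sum + a) :: (cusum v).drop (p - 1) := by
  set j := p - 1 with hj
  have hjlen : j < v.length := by omega
  have hp : p = j + 1 := by omega
  have hgd : v.getD j 0 = v[j] := List.getD_eq_getElem v 0 hjlen
  have hvsplit : v = v.take j ++ v[j] :: v.drop (j + 1) := by
    rw [← List.drop_eq_getElem_cons hjlen, List.take_append_drop]
  have htlen : (v.take j).length = j := by rw [List.length_take]; omega
  have hcv : cusum v = cusum (v.take j) ++
      (((v.take j).sum + v[j]) ::
        ((cusum (v.drop (j + 1))).map fun z => (v.take j).sum + (v[j] + z))) := by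
    conv_lhs => rw [hvsplit]
    rw [cusum_append, cusum_cons]
    simp only [List.map_cons, List.map_map]
    rfl
  have hclen : (cusum (v.take j)).length = j := by rw [cusum_length, htlen]
  have h1 : (cusum v).take j = cusum (v.take j) := by
    rw [hcv]; exact List.take_left' hclen
  have h2 : (cusum v).drop j = ((v.take j).sum + v[j]) ::
      ((cusum (v.drop (j + 1))).map fun z => (v.take j).sum + (v[j] + z)) := by
    rw [hcv]; exact List.drop_left' hclen
  rw [hp, hgd, h1, h2, cusum_append, cusum_cons, cusum_cons]
  simp only [List.map_cons, List.map_map]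
  refine congrArg _ (congrArg _ (congrArg₂ _ ?_ (List.map_congr_left fun z _ => ?_)))
  · abel
  · simp only [Function.comp]
    abel

end NoisyDup
end

section
/- Let m ≥ 1 and 0 ≤ α ≤ m − 1, and let u, v ∈ C_VT(α, m) with |u| = |v| ≤ m − 1. If some binary word w can be obtained from u by deleting a single bit and also obtained from v by deleting a single bit, then u = v; likewise, if some binary word w can be obtained from u by inserting a single bit and also obtained from v by inserting a single bit, then u = v. That is, when the length of the stored word is known, the variable-length VT code C_VT(α, m) corrects a single insertion or deletion. -/
namespace BinCode

/-- Hamming weight of a binary string. -/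
def wt (u : List Bool) : ℕ := u.count true

/-- The VT syndrome `Σ_{i=1}^{|u|} i·u_i` (positions 1-indexed). -/
def vtSum (u : List Bool) : ℕ := (u.zipIdx.map fun p => if p.1 then p.2 + 1 else 0).sum

/-- `Σ_{i=1}^{|u|} i · (u_1 + ⋯ + u_i)`. -/
def wSum (u : List Bool) : ℕ :=
  ((List.range u.length).map fun i => (i + 1) * wt (u.take (i + 1))).sum

/-- The (variable-length) Varshamov–Tenengolts code `C_VT(α, m)`. -/
def CVT (α m : ℕ) : Set (List Bool) := {z | z.length ≤ m - 1 ∧ vtSum z % m = α}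

/-- The binary code `C_{(a,b,c)} ⊆ {0,1}^n`. -/
def Cabc (n a b c : ℕ) : Set (List Bool) :=
  {u | u.length = n ∧ vtSum u % (2 * n + 3) = a ∧ wt u % 5 = b ∧
    wSum u % (2 * n + 1) = c}

/-- `w` is obtained from `u` by deleting one bit. -/
def delBit (u w : List Bool) : Prop := ∃ i, i < u.length ∧ w = u.eraseIdx i

/-- `w` is obtained from `u` by inserting the bit `b` at some position. -/
def insBitAt (u w : List Bool) (b : Bool) : Prop :=
  ∃ i, i ≤ u.length ∧ w = u.take i ++ b :: u.drop i

/-- `w` is obtained from `u` by inserting one bit. -/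
def insBit (u w : List Bool) : Prop := ∃ b, insBitAt u w b

/-- Flip the bit at 0-based index `i`. -/
def flipAt (u : List Bool) (i : ℕ) : List Bool := u.set i (!(u.getD i false))

/-- `w` is obtained from `u` by flipping one bit. -/
def flip1 (u w : List Bool) : Prop := ∃ i, i < u.length ∧ w = flipAt u i

/-- `w` is obtained from `u` by flipping two adjacent bits. -/
def flip2 (u w : List Bool) : Prop :=
  ∃ i, i + 1 < u.length ∧ w = flipAt (flipAt u i) (i + 1)

/-- `w` is obtained from `u` by replacing one bit by two adjacent bits via
`0 → 11` or `1 → 00`. -/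
def expand1 (u w : List Bool) : Prop :=
  ∃ i, i < u.length ∧
    ((u.getD i false = false ∧ w = u.take i ++ true :: true :: u.drop (i + 1)) ∨
     (u.getD i false = true ∧ w = u.take i ++ false :: false :: u.drop (i + 1)))

/-- `w` is obtained from `u` by inserting the adjacent pair `b b`. -/
def insPair (u w : List Bool) (b : Bool) : Prop :=
  ∃ i, i ≤ u.length ∧ w = u.take i ++ b :: b :: u.drop i

/-- `w` is obtained from `u` by replacing an occurrence of `1` by `010`. -/
def oneTo010 (u w : List Bool) : Prop :=
  ∃ i, i < u.length ∧ u.getD i false = true ∧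
    w = u.take i ++ false :: true :: false :: u.drop (i + 1)


lemma wt_cons (x : Bool) (l : List Bool) : wt (x :: l) = (if x then 1 else 0) + wt l := by
  simp [wt, List.count_cons]; cases x <;> simp [Nat.add_comm]

lemma wt_append (l₁ l₂ : List Bool) : wt (l₁ ++ l₂) = wt l₁ + wt l₂ := by
  simp [wt, List.count_append]

lemma vtSumFrom (l : List Bool) : ∀ n : ℕ,
    ((l.zipIdx n).map fun p => if p.1 then p.2 + 1 else 0).sum = n * wt l + vtSum l := by
  induction l with
  | nil => simp [vtSum, wt]
  | cons x t ih =>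
    intro n
    have h0 : vtSum (x :: t) = (if x then 1 else 0) + (wt t + vtSum t) := by
      rw [vtSum, List.zipIdx_cons]
      simp only [List.map_cons, List.sum_cons, zero_add, ih 1, one_mul]
    rw [h0]
    simp only [List.zipIdx_cons, List.map_cons, List.sum_cons, ih (n+1), wt_cons]
    cases x <;> simp <;> ring

lemma vtSum_cons (x : Bool) (l : List Bool) :
    vtSum (x :: l) = (if x then 1 else 0) + (wt l + vtSum l) := by
  rw [vtSum, List.zipIdx_cons]
  simp only [List.map_cons, List.sum_cons, zero_add, vtSumFrom l 1, one_mul]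

lemma wt_insert (l : List Bool) (i : ℕ) (b : Bool) :
    wt (l.take i ++ b :: l.drop i) = (if b then 1 else 0) + wt l := by
  rw [wt_append, wt_cons]
  conv_rhs => rw [← List.take_append_drop i l, wt_append]
  ring

lemma vtSum_insert (l : List Bool) (b : Bool) :
    ∀ i : ℕ, i ≤ l.length →
    vtSum (l.take i ++ b :: l.drop i) =
      vtSum l + wt (l.drop i) + (if b then i + 1 else 0) := by
  induction l with
  | nil =>
    intro i hi
    have : i = 0 := by simpa using hi
    subst this
    simp [vtSum_cons, vtSum, wt]
  | cons x t ih =>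
    intro i hi
    cases i with
    | zero => simp [vtSum_cons]; ring
    | succ i =>
      have hi' : i ≤ t.length := by simpa using hi
      simp only [List.take_succ_cons, List.drop_succ_cons, List.cons_append, vtSum_cons,
        wt_insert, ih i hi']
      cases b <;> cases x <;> simp <;> ring

lemma length_insert (l : List Bool) (i : ℕ) (b : Bool) :
    (l.take i ++ b :: l.drop i).length = l.length + 1 := by
  simp
  omega

lemma insert_adj (l : List Bool) (i : ℕ) (b : Bool) (h : i < l.length)
    (hb : l.getD i false = b) :
    l.take i ++ b :: l.drop i = l.take (i+1) ++ b :: l.drop (i+1) := by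
  have hb' : l[i] = b := by rwa [List.getD_eq_getElem l false h] at hb
  rw [List.take_succ, List.drop_eq_getElem_cons h, List.getElem?_eq_getElem h, hb']
  simp

lemma insert_run (l : List Bool) (b : Bool) (i : ℕ) :
    ∀ j, i ≤ j → j ≤ l.length → (∀ k, i ≤ k → k < j → l.getD k false = b) →
    l.take i ++ b :: l.drop i = l.take j ++ b :: l.drop j := by
  intro j hij
  induction j, hij using Nat.le_induction with
  | base => intros; rfl
  | succ j hij ih =>
    intro hj hrun
    rw [ih (by omega) (fun k hk1 hk2 => hrun k hk1 (by omega))]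
    exact insert_adj l j b (by omega) (hrun j hij (by omega))

lemma erase_adj (l : List Bool) (i : ℕ) (h : i + 1 < l.length)
    (heq : l.getD i false = l.getD (i+1) false) :
    l.eraseIdx i = l.eraseIdx (i+1) := by
  have h0 : i < l.length := by omega
  have h1 : l[i] = l[i+1] := by
    rwa [List.getD_eq_getElem l false h0, List.getD_eq_getElem l false h] at heq
  rw [List.eraseIdx_eq_take_drop_succ, List.eraseIdx_eq_take_drop_succ,
    List.take_succ, List.drop_eq_getElem_cons h, List.getElem?_eq_getElem h0, h1]
  simp

lemma erase_run (l : List Bool) (b : Bool) (i : ℕ) :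
    ∀ j, i ≤ j → j < l.length → (∀ k, i ≤ k → k ≤ j → l.getD k false = b) →
    l.eraseIdx i = l.eraseIdx j := by
  intro j hij
  induction j, hij using Nat.le_induction with
  | base => intros; rfl
  | succ j hij ih =>
    intro hj hrun
    rw [ih (by omega) (fun k hk1 hk2 => hrun k hk1 (by omega))]
    refine erase_adj l j hj ?_
    rw [hrun j hij (by omega), hrun (j+1) (by omega) (by omega)]

lemma insert_take (l : List Bool) (i : ℕ) (b : Bool) (h : i ≤ l.length) :
    (l.take i ++ b :: l.drop i).take i = l.take i :=
  List.take_left' (by simp; omega) |>.trans rfl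

lemma insert_drop (l : List Bool) (i : ℕ) (b : Bool) (h : i ≤ l.length) :
    (l.take i ++ b :: l.drop i).drop (i+1) = l.drop i := by
  have : (l.take i ++ b :: l.drop i).drop i = b :: l.drop i :=
    List.drop_left' (by simp; omega)
  have h2 := congrArg (List.drop 1) this
  rw [List.drop_drop] at h2
  simpa using h2

lemma insert_getD (l : List Bool) (i : ℕ) (b : Bool) (h : i ≤ l.length) :
    (l.take i ++ b :: l.drop i).getD i false = b := by
  have hlen : i < (l.take i ++ b :: l.drop i).length := by rw [length_insert]; omega
  rw [List.getD_eq_getElem _ false hlen]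
  have : (l.take i ++ b :: l.drop i).drop i = b :: l.drop i :=
    List.drop_left' (by simp; omega)
  have := List.drop_eq_getElem_cons hlen
  rw [List.drop_left' (show (l.take i).length = i by simp; omega)] at this
  exact (List.cons.injEq .. ▸ this).1.symm

lemma insert_erase (l : List Bool) (i : ℕ) (b : Bool) (h : i ≤ l.length) :
    (l.take i ++ b :: l.drop i).eraseIdx i = l := by
  rw [List.eraseIdx_eq_take_drop_succ, insert_take l i b h, insert_drop l i b h,
    List.take_append_drop]

lemma erase_insert (l : List Bool) (i : ℕ) (h : i < l.length) :
    (l.eraseIdx i).take i ++ (l.getD i false) :: (l.eraseIdx i).drop i = l := by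
  rw [List.eraseIdx_eq_take_drop_succ,
    List.take_left' (show (l.take i).length = i by simp; omega),
    List.drop_left' (show (l.take i).length = i by simp; omega),
    List.getD_eq_getElem l false h, ← List.drop_eq_getElem_cons h, List.take_append_drop]

/-- `vtSum` of an erasure. -/
lemma vtSum_erase (l : List Bool) (i : ℕ) (h : i < l.length) :
    vtSum l = vtSum (l.eraseIdx i) + wt (l.drop (i+1)) +
      (if l.getD i false then i + 1 else 0) := by
  have hlen : (l.eraseIdx i).length = l.length - 1 := by
    rw [List.length_eraseIdx]; simp [h]
  have hi : i ≤ (l.eraseIdx i).length := by omega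
  have hdrop : (l.eraseIdx i).drop i = l.drop (i+1) := by
    rw [List.eraseIdx_eq_take_drop_succ]
    exact List.drop_left' (by simp; omega)
  conv_lhs => rw [← erase_insert l i h]
  rw [vtSum_insert _ _ i hi, hdrop]

/-- Splitting the weight of a tail. -/
lemma wt_drop_split (l : List Bool) (i j : ℕ) (hij : i ≤ j) :
    wt (l.drop i) = wt ((l.drop i).take (j - i)) + wt (l.drop j) := by
  conv_lhs => rw [← List.take_append_drop (j - i) (l.drop i)]
  rw [wt_append, List.drop_drop]
  have h : i + (j - i) = j := by omega
  rw [h]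

lemma seg_length (l : List Bool) (i j : ℕ) (hij : i ≤ j) (hj : j ≤ l.length) :
    ((l.drop i).take (j - i)).length = j - i := by
  rw [List.length_take, List.length_drop]
  exact Nat.min_eq_left (by omega)

lemma getD_mem_seg (l : List Bool) (i j k : ℕ) (h1 : i ≤ k) (h2 : k < j) (h3 : j ≤ l.length) :
    l.getD k false ∈ (l.drop i).take (j - i) := by
  have hk : k < l.length := by omega
  have hlt : k - i < ((l.drop i).take (j - i)).length := by
    rw [seg_length l i j (by omega) h3]; omega
  have : ((l.drop i).take (j - i))[k - i] = l.getD k false := by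
    rw [List.getElem_take, List.getElem_drop, List.getD_eq_getElem l false hk]
    congr 1
    omega
  rw [← this]
  exact List.getElem_mem hlt

lemma all_false_of_wt_zero {s : List Bool} (h : wt s = 0) : ∀ x ∈ s, x = false := by
  intro x hx
  have := List.count_eq_zero.mp h
  cases x
  · rfl
  · exact absurd hx this

lemma all_true_of_wt_length {s : List Bool} (h : wt s = s.length) : ∀ x ∈ s, x = true :=
  fun x hx => (List.count_eq_length.mp h x hx).symm

lemma core_ins_le (w : List Bool) (i j : ℕ) (b c : Bool)
    (hj : j ≤ w.length) (hij : i ≤ j)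
    (hD : (if b then i + 1 else 0) + wt (w.drop i) =
          (if c then j + 1 else 0) + wt (w.drop j)) :
    w.take i ++ b :: w.drop i = w.take j ++ c :: w.drop j := by
  have hsplit := wt_drop_split w i j hij
  have hcount : wt ((w.drop i).take (j - i)) ≤ j - i := by
    show List.count true _ ≤ _
    have := List.count_le_length (a := true) (l := (w.drop i).take (j - i))
    rwa [seg_length w i j hij hj] at this
  cases b <;> cases c <;>
    simp only [Bool.false_eq_true, if_false, if_true, reduceIte] at hD
  · -- both false : all-false run
    have hseg : wt ((w.drop i).take (j - i)) = 0 := by omega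
    rw [insert_run w false i j hij hj ?_]
    intro k hk1 hk2
    exact all_false_of_wt_zero hseg _ (getD_mem_seg w i j k hk1 hk2 hj)
  · omega
  · omega
  · -- both true : all-true run
    have hseg : wt ((w.drop i).take (j - i)) = j - i := by omega
    rw [insert_run w true i j hij hj ?_]
    intro k hk1 hk2
    refine all_true_of_wt_length ?_ _ (getD_mem_seg w i j k hk1 hk2 hj)
    rw [seg_length w i j hij hj]; exact hseg

lemma core_ins (w : List Bool) (i j : ℕ) (b c : Bool)
    (hi : i ≤ w.length) (hj : j ≤ w.length)
    (hD : (if b then i + 1 else 0) + wt (w.drop i) =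
          (if c then j + 1 else 0) + wt (w.drop j)) :
    w.take i ++ b :: w.drop i = w.take j ++ c :: w.drop j := by
  rcases le_total i j with h | h
  · exact core_ins_le w i j b c hj h hD
  · exact (core_ins_le w j i c b hi h hD.symm).symm

lemma core_del_le (w : List Bool) (i j : ℕ)
    (hi : i < w.length) (hj : j < w.length) (hij : i ≤ j)
    (hE : (if w.getD i false then i + 1 else 0) + wt (w.drop (i+1)) =
          (if w.getD j false then j + 1 else 0) + wt (w.drop (j+1))) :
    w.eraseIdx i = w.eraseIdx j := by
  have hsplit := wt_drop_split w (i+1) (j+1) (by omega)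
  have hcount : wt ((w.drop (i+1)).take (j + 1 - (i+1))) ≤ j - i := by
    show List.count true _ ≤ _
    have := List.count_le_length (a := true) (l := (w.drop (i+1)).take (j + 1 - (i+1)))
    rw [seg_length w (i+1) (j+1) (by omega) (by omega)] at this
    omega
  rcases Bool.eq_false_or_eq_true (w.getD i false) with hbi | hbi <;>
    rcases Bool.eq_false_or_eq_true (w.getD j false) with hbj | hbj <;>
      rw [hbi, hbj] at hE <;>
        simp only [Bool.false_eq_true, if_false, if_true, reduceIte] at hE
  · -- both true
    have hseg : wt ((w.drop (i+1)).take (j + 1 - (i+1))) = j - i := by omega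
    refine erase_run w true i j hij hj ?_
    intro k hk1 hk2
    rcases Nat.eq_or_lt_of_le hk1 with rfl | hk1'
    · exact hbi
    · refine all_true_of_wt_length ?_ _
        (getD_mem_seg w (i+1) (j+1) k (by omega) (by omega) (by omega))
      rw [seg_length w (i+1) (j+1) (by omega) (by omega)]
      omega
  · -- i true, j false : impossible
    omega
  · -- i false, j true : impossible
    omega
  · -- both false
    have hseg : wt ((w.drop (i+1)).take (j + 1 - (i+1))) = 0 := by omega
    refine erase_run w false i j hij hj ?_
    intro k hk1 hk2
    rcases Nat.eq_or_lt_of_le hk1 with rfl | hk1'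
    · exact hbi
    · exact all_false_of_wt_zero hseg _
        (getD_mem_seg w (i+1) (j+1) k (by omega) (by omega) (by omega))

lemma core_del (w : List Bool) (i j : ℕ)
    (hi : i < w.length) (hj : j < w.length)
    (hE : (if w.getD i false then i + 1 else 0) + wt (w.drop (i+1)) =
          (if w.getD j false then j + 1 else 0) + wt (w.drop (j+1))) :
    w.eraseIdx i = w.eraseIdx j := by
  rcases le_total i j with h | h
  · exact core_del_le w i j hi hj h hE
  · exact (core_del_le w j i hj hi h hE.symm).symm

lemma getD_mem_drop (w : List Bool) (t k : ℕ) (h1 : t ≤ k) (h2 : k < w.length) :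
    w.getD k false ∈ w.drop t := by
  have hlt : k - t < (w.drop t).length := by rw [List.length_drop]; omega
  have : (w.drop t)[k - t] = w.getD k false := by
    rw [List.getElem_drop, List.getD_eq_getElem w false h2]
    congr 1
    omega
  rw [← this]
  exact List.getElem_mem hlt

lemma wt_drop_le (l : List Bool) (i : ℕ) : wt (l.drop i) ≤ l.length - i := by
  show List.count true _ ≤ _
  have := List.count_le_length (a := true) (l := l.drop i)
  rwa [List.length_drop] at this

lemma D_le (l : List Bool) (i : ℕ) (b : Bool) (h : i ≤ l.length) :
    (if b then i + 1 else 0) + wt (l.drop i) ≤ l.length + 1 := by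
  have := wt_drop_le l i
  cases b <;> simp <;> omega

lemma E_le (w : List Bool) (i : ℕ) (h : i < w.length) :
    (if w.getD i false then i + 1 else 0) + wt (w.drop (i+1)) ≤ w.length := by
  have := wt_drop_le w (i+1)
  rcases Bool.eq_false_or_eq_true (w.getD i false) with hb | hb <;> rw [hb] <;>
    simp <;> omega

lemma modeq_cases (m a b : ℕ) (ha : a ≤ m) (hb : b ≤ m) (h : a % m = b % m) :
    a = b ∨ (a = 0 ∧ b = m) ∨ (a = m ∧ b = 0) := by
  rcases eq_or_lt_of_le ha with rfl | ha'
  · rcases eq_or_lt_of_le hb with rfl | hb'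
    · exact Or.inl rfl
    · rw [Nat.mod_self, Nat.mod_eq_of_lt hb'] at h
      exact Or.inr (Or.inr ⟨rfl, h.symm⟩)
  · rcases eq_or_lt_of_le hb with rfl | hb'
    · rw [Nat.mod_self, Nat.mod_eq_of_lt ha'] at h
      exact Or.inr (Or.inl ⟨h, rfl⟩)
    · rw [Nat.mod_eq_of_lt ha', Nat.mod_eq_of_lt hb'] at h
      exact Or.inl h

lemma corner (w : List Bool) (i j : ℕ) (hi : i < w.length) (hj : j < w.length)
    (h0 : (if w.getD i false then i + 1 else 0) + wt (w.drop (i+1)) = 0)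
    (hL : (if w.getD j false then j + 1 else 0) + wt (w.drop (j+1)) = w.length) :
    False := by
  have hdji := wt_drop_le w (j+1)
  have hbi : w.getD i false = false := by
    rcases Bool.eq_false_or_eq_true (w.getD i false) with hb | hb
    · exfalso; rw [hb] at h0; simp only [reduceIte] at h0; omega
    · exact hb
  rw [hbi] at h0
  simp only [Bool.false_eq_true, if_false] at h0
  have h0' : wt (w.drop (i+1)) = 0 := by omega
  have hbj : w.getD j false = true := by
    rcases Bool.eq_false_or_eq_true (w.getD j false) with hb | hb
    · exact hb
    · exfalso; rw [hb] at hL; simp only [Bool.false_eq_true, if_false] at hL; omega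
  rw [hbj] at hL
  simp only [reduceIte] at hL
  have halltrue : ∀ x ∈ w.drop (j+1), x = true := by
    apply all_true_of_wt_length
    rw [List.length_drop]
    omega
  rcases lt_trichotomy i j with hij | rfl | hij
  · have hmem := getD_mem_drop w (i+1) j (by omega) hj
    have h2 := all_false_of_wt_zero h0' _ hmem
    rw [hbj] at h2
    exact absurd h2 (by simp)
  · rw [hbi] at hbj
    exact absurd hbj (by simp)
  · have hmem := getD_mem_drop w (j+1) i (by omega) hi
    have h2 := halltrue _ hmem
    rw [hbi] at h2
    exact absurd h2 (by simp)

/-- when the length of the stored word is known, the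
variable-length VT code `C_VT(α, m)` corrects a single insertion or deletion. -/
theorem vt_corrects_single_indel
    (m α : ℕ) (hm : 1 ≤ m) (hα : α ≤ m - 1)
    (u v : List Bool) (hu : u ∈ CVT α m) (hv : v ∈ CVT α m)
    (hlen : u.length = v.length) :
    (∀ w, delBit u w → delBit v w → u = v) ∧
    (∀ w, insBit u w → insBit v w → u = v) := by
  obtain ⟨hul, huvt⟩ := hu
  obtain ⟨hvl, hvvt⟩ := hv
  constructor
  · -- deletion
    rintro w' ⟨i, hi, rfl⟩ ⟨j, hj, hw⟩
    have hWlen : (u.eraseIdx i).length = u.length - 1 := by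
      rw [List.length_eraseIdx]; simp [hi]
    have hiW : i ≤ (u.eraseIdx i).length := by omega
    have hjW : j ≤ (u.eraseIdx i).length := by rw [hWlen]; omega
    have hu' := erase_insert u i hi
    have hv' := erase_insert v j hj
    rw [← hw] at hv'
    have e1 : vtSum u = vtSum (u.eraseIdx i) +
        ((if u.getD i false then i + 1 else 0) + wt ((u.eraseIdx i).drop i)) := by
      conv_lhs => rw [← hu']
      rw [vtSum_insert _ _ i hiW]
      ring
    have e2 : vtSum v = vtSum (u.eraseIdx i) +
        ((if v.getD j false then j + 1 else 0) + wt ((u.eraseIdx i).drop j)) := by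
      conv_lhs => rw [← hv']
      rw [vtSum_insert _ _ j hjW]
      ring
    have hmodeq : (vtSum (u.eraseIdx i) +
        ((if u.getD i false then i + 1 else 0) + wt ((u.eraseIdx i).drop i))) % m =
        (vtSum (u.eraseIdx i) +
        ((if v.getD j false then j + 1 else 0) + wt ((u.eraseIdx i).drop j))) % m := by
      rw [← e1, ← e2, huvt, hvvt]
    have hAB := Nat.ModEq.add_left_cancel' (vtSum (u.eraseIdx i)) hmodeq
    have hA := D_le (u.eraseIdx i) i (u.getD i false) hiW
    have hB := D_le (u.eraseIdx i) j (v.getD j false) hjW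
    have hAlt : (if u.getD i false then i + 1 else 0) + wt ((u.eraseIdx i).drop i) < m := by
      omega
    have hBlt : (if v.getD j false then j + 1 else 0) + wt ((u.eraseIdx i).drop j) < m := by
      omega
    have hABeq : (if u.getD i false then i + 1 else 0) + wt ((u.eraseIdx i).drop i) =
        (if v.getD j false then j + 1 else 0) + wt ((u.eraseIdx i).drop j) := by
      rw [Nat.ModEq, Nat.mod_eq_of_lt hAlt, Nat.mod_eq_of_lt hBlt] at hAB
      exact hAB
    have hcore := core_ins (u.eraseIdx i) i j (u.getD i false) (v.getD j false)
      hiW hjW hABeq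
    rw [← hu', ← hv', hcore]
  · -- insertion
    rintro w ⟨b, i, hi, rfl⟩ ⟨c, j, hj, hw⟩
    set W := u.take i ++ b :: u.drop i with hWdef
    have hWlen : W.length = u.length + 1 := length_insert u i b
    have hWlen' : W.length = v.length + 1 := by rw [hw]; exact length_insert v j c
    have hiW : i < W.length := by omega
    have hjW : j < W.length := by omega
    have heu : W.eraseIdx i = u := insert_erase u i b hi
    have hev : W.eraseIdx j = v := by rw [hw]; exact insert_erase v j c hj
    have e1 := vtSum_erase W i hiW
    rw [heu] at e1
    have e2 := vtSum_erase W j hjW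
    rw [hev] at e2
    have keyeq : vtSum u + ((if W.getD i false then i + 1 else 0) + wt (W.drop (i+1))) =
        vtSum v + ((if W.getD j false then j + 1 else 0) + wt (W.drop (j+1))) := by
      omega
    have h2 : (vtSum u + ((if W.getD i false then i + 1 else 0) + wt (W.drop (i+1)))) % m =
        (vtSum v + ((if W.getD i false then i + 1 else 0) + wt (W.drop (i+1)))) % m :=
      Nat.ModEq.add_right _ (huvt.trans hvvt.symm)
    rw [keyeq] at h2
    have h3 := Nat.ModEq.add_left_cancel' (vtSum v) h2
    have hEi := E_le W i hiW
    have hEj := E_le W j hjW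
    have hiLe : (if W.getD i false then i + 1 else 0) + wt (W.drop (i+1)) ≤ m := by omega
    have hjLe : (if W.getD j false then j + 1 else 0) + wt (W.drop (j+1)) ≤ m := by omega
    rcases modeq_cases m _ _ hjLe hiLe h3 with heq | ⟨h0, hM⟩ | ⟨hM, h0⟩
    · have hcore := core_del W i j hiW hjW heq.symm
      rw [← heu, ← hev, hcore]
    · -- E_j = 0, E_i = m
      exact (corner W j i hjW hiW h0 (by omega)).elim
    · -- E_i = 0, E_j = m
      exact (corner W i j hiW hjW h0 (by omega)).elim


end BinCode
end

section
/- Let q ≥ 2, m ≥ 1, 0 ≤ α ≤ q − 1 and 0 ≤ β ≤ m − 1, and let u, v ∈ C_Tq(α, β, m) with |u| = |v| ≤ m. If some word w ∈ Σ_q^* can be obtained from u by deleting a single symbol and also obtained from v by deleting a single symbol, then u = v; likewise, if some word w can be obtained from u by inserting a single symbol and also obtained from v by inserting a single symbol, then u = v. That is, when the length of the stored word is known, the variable-length Tenengolts code C_Tq(α, β, m) corrects a single insertion or deletion over Σ_q. -/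
open List

namespace NoisyDup

variable {q : ℕ}

/-! ### Auxiliary development for Statement 19 -/

section IndelAux

/-- Insert `b` at position `i`. -/
def insA {α : Type*} (i : ℕ) (b : α) (x : List α) : List α := x.take i ++ b :: x.drop i

lemma insA_zero {α : Type*} (b : α) (x : List α) : insA 0 b x = b :: x := rfl

lemma insA_succ_cons {α : Type*} (i : ℕ) (b a : α) (x : List α) :
    insA (i + 1) b (a :: x) = a :: insA i b x := rfl

lemma length_insA {α : Type*} {i : ℕ} (b : α) {x : List α} (h : i ≤ x.length) :
    (insA i b x).length = x.length + 1 := by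
  simp [insA]; omega

lemma getD_insA {α : Type*} (b d : α) : ∀ (x : List α) (i t : ℕ), i ≤ x.length →
    (insA i b x).getD t d =
      if t < i then x.getD t d else if t = i then b else x.getD (t - 1) d
  | x, 0, t, _ => by
      rw [insA_zero]; cases t <;> simp
  | [], i + 1, t, h => by simp at h
  | a :: x, i + 1, 0, h => by rw [insA_succ_cons]; simp
  | a :: x, i + 1, t + 1, h => by
      rw [insA_succ_cons]
      have IH := getD_insA b d x i t (by simpa using h)
      simp only [List.getD_cons_succ, IH]
      rcases Nat.lt_trichotomy t i with h' | h' | h'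
      · rw [if_pos h', if_pos (by omega)]
      · subst h'
        rw [if_neg (by omega), if_pos rfl, if_neg (by omega), if_pos rfl]
      · obtain ⟨s, rfl⟩ : ∃ s, t = s + 1 := ⟨t - 1, by omega⟩
        rw [if_neg (by omega), if_neg (by omega), if_neg (by omega), if_neg (by omega)]
        simp

lemma count_insA {α : Type*} [BEq α] (i : ℕ) (b c : α) (x : List α) :
    (insA i b x).count c = x.count c + (if b == c then 1 else 0) := by
  have h0 : x.count c = (x.take i).count c + (x.drop i).count c := by
    rw [← List.count_append, List.take_append_drop]
  rw [insA, List.count_append, List.count_cons, h0]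
  ring

lemma insA_step {α : Type*} (b : α) : ∀ (x : List α) (p : ℕ), p < x.length →
    x.getD p b = b → insA p b x = insA (p + 1) b x
  | [], p, h, _ => absurd h (by simp)
  | a :: x, 0, _, hb => by
      rw [List.getD_cons_zero] at hb
      subst hb
      rfl
  | a :: x, p + 1, h, hb => by
      rw [insA_succ_cons, insA_succ_cons]
      exact congrArg (a :: ·) (insA_step b x p (by simpa using h) (by simpa using hb))

lemma insA_run {α : Type*} (b : α) (x : List α) : ∀ (d p : ℕ), p + d ≤ x.length →
    (∀ t, t < d → x.getD (p + t) b = b) → insA p b x = insA (p + d) b x := by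
  intro d
  induction d with
  | zero => intro p _ _; rfl
  | succ d IH =>
    intro p h hall
    rw [insA_step b x p (by omega) (by simpa using hall 0 (by omega))]
    have h2 := IH (p + 1) (by omega) (fun t ht => by
      have h3 := hall (t + 1) (by omega)
      rwa [show p + (t + 1) = p + 1 + t by omega] at h3)
    rwa [show p + 1 + d = p + (d + 1) by omega] at h2

lemma eraseIdx_insA {α : Type*} (b : α) : ∀ (x : List α) (i : ℕ), i ≤ x.length →
    (insA i b x).eraseIdx i = x
  | x, 0, _ => rfl
  | [], i + 1, h => by simp at h
  | a :: x, i + 1, h => by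
      rw [insA_succ_cons]
      show a :: (insA i b x).eraseIdx i = a :: x
      exact congrArg (a :: ·) (eraseIdx_insA b x i (by simpa using h))

lemma insA_getD_eraseIdx {α : Type*} (d : α) : ∀ (u : List α) (i : ℕ), i < u.length →
    insA i (u.getD i d) (u.eraseIdx i) = u
  | [], _, h => by simp at h
  | a :: u, 0, _ => by simp [insA_zero]
  | a :: u, i + 1, h => by
      show a :: insA i ((a :: u).getD (i + 1) d) (u.eraseIdx i) = a :: u
      rw [List.getD_cons_succ]
      exact congrArg (a :: ·) (insA_getD_eraseIdx d u i (by simpa using h))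

lemma eraseIdx_insA_comm {α : Type*} (b : α) : ∀ (x : List α) (i j : ℕ), i < j →
    j ≤ x.length → (insA i b x).eraseIdx j = insA i b (x.eraseIdx (j - 1))
  | x, 0, j, hij, hj => by
      obtain ⟨j', rfl⟩ : ∃ j', j = j' + 1 := ⟨j - 1, by omega⟩
      rw [insA_zero]
      rfl
  | [], i + 1, j, hij, hj => by simp at hj; omega
  | a :: x, i + 1, j, hij, hj => by
      obtain ⟨j', rfl⟩ : ∃ j', j = j' + 1 := ⟨j - 1, by omega⟩
      obtain ⟨k, rfl⟩ : ∃ k, j' = k + 1 := ⟨j' - 1, by omega⟩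
      show a :: (insA i b x).eraseIdx (k + 1) = insA (i + 1) b (a :: x.eraseIdx k)
      rw [eraseIdx_insA_comm b x i (k + 1) (by omega) (by simpa using hj)]
      rfl

lemma sum_map_insA {α : Type*} (f : α → ℕ) (b : α) : ∀ (x : List α) (i : ℕ),
    ((insA i b x).map f).sum = f b + (x.map f).sum
  | x, 0 => by simp [insA_zero]
  | [], i + 1 => by simp [insA]
  | a :: x, i + 1 => by
      rw [insA_succ_cons]
      simp only [List.map_cons, List.sum_cons, sum_map_insA f b x i]
      omega

lemma eq_of_getD {α : Type*} (d : α) {l1 l2 : List α} (hlen : l1.length = l2.length)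
    (h : ∀ t, t < l1.length → l1.getD t d = l2.getD t d) : l1 = l2 := by
  apply List.ext_getElem hlen
  intro n h1 h2
  rw [← List.getD_eq_getElem l1 d h1, ← List.getD_eq_getElem l2 d h2]
  exact h n h1

lemma getD_eraseIdx' {α : Type*} (l : List α) (d : α) (p t : ℕ) (hp : p < l.length)
    (hl : t < l.length - 1) :
    (l.eraseIdx p).getD t d = if t < p then l.getD t d else l.getD (t + 1) d := by
  have hlen : (l.eraseIdx p).length = l.length - 1 := by
    rw [List.length_eraseIdx]; simp [hp]
  rw [List.getD_eq_getElem _ _ (by omega : t < (l.eraseIdx p).length),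
    List.getElem_eraseIdx]
  split
  · exact (List.getD_eq_getElem l d (by omega)).symm
  · exact (List.getD_eq_getElem l d (by omega)).symm

end IndelAux

section BinaryVT

/-- Cumulative-position weight of a binary string (= `tqSum` after `zeta`). -/
def Vb (u : List Bool) : ℕ := ((u.zipIdx.map Prod.swap).map fun p => if p.2 then p.1 else 0).sum

def VbF (k : ℕ) (u : List Bool) : ℕ :=
  (((u.zipIdx k).map Prod.swap).map fun p => if p.2 then p.1 else 0).sum

lemma Vb_eq_VbF (u : List Bool) : Vb u = VbF 0 u := rfl

lemma VbF_cons (k : ℕ) (a : Bool) (u : List Bool) :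
    VbF k (a :: u) = (if a then k else 0) + VbF (k + 1) u := by
  simp [VbF, List.zipIdx_cons]

lemma VbF_succ : ∀ (u : List Bool) (k : ℕ), VbF (k + 1) u = VbF k u + u.count true
  | [], k => rfl
  | a :: u, k => by
      rw [VbF_cons, VbF_cons, VbF_succ u (k + 1), VbF_succ u k, List.count_cons]
      cases a <;> simp <;> omega

lemma Vb_cons (a : Bool) (u : List Bool) : Vb (a :: u) = u.count true + Vb u := by
  rw [Vb_eq_VbF, VbF_cons, VbF_succ, Vb_eq_VbF]
  cases a <;> simp <;> omega

lemma Vb_insA : ∀ (x : List Bool) (i : ℕ) (a : Bool), i ≤ x.length →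
    Vb (insA i a x) = Vb x + (if a then i else 0) + (x.drop i).count true
  | x, 0, a, _ => by
      rw [insA_zero, Vb_cons]
      cases a <;> simp <;> omega
  | [], i + 1, a, h => by simp at h
  | c :: t, i + 1, a, h => by
      rw [insA_succ_cons, Vb_cons, Vb_cons, count_insA,
        Vb_insA t i a (by simpa using h)]
      cases a <;> simp [List.drop_succ_cons] <;> omega

end BinaryVT
section ZetaLemmas

variable {q : ℕ}

lemma length_zeta (z : List (ZMod q)) : (zeta z).length = z.length := by
  simp [zeta]

lemma getD_zeta (z : List (ZMod q)) (t : ℕ) (ht : t < z.length) :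
    (zeta z).getD t false =
      if t = 0 then true else decide ((z.getD (t - 1) 0).val ≤ (z.getD t 0).val) := by
  have h1 : t < (zeta z).length := by rwa [length_zeta]
  rw [List.getD_eq_getElem _ _ h1]
  simp only [zeta, List.getElem_map, List.getElem_zipIdx, Prod.fst_swap, Prod.snd_swap, Nat.zero_add]
  rcases Nat.eq_zero_or_pos t with rfl | htpos
  · simp
  · rw [if_neg (by omega), if_neg (by omega), List.getD_eq_getElem z 0 ht]

lemma zeta_head (z : List (ZMod q)) (hz : 0 < z.length) :
    (zeta z).getD 0 false = true := by
  rw [getD_zeta z 0 hz]; simp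

lemma decide_trich (x y w : ℕ) :
    decide (x ≤ w) = decide (x ≤ y) ∨ decide (x ≤ w) = decide (y ≤ w) := by
  by_cases h1 : x ≤ w <;> by_cases h2 : x ≤ y <;> by_cases h3 : y ≤ w <;>
    simp_all <;> omega

/-- Deleting one symbol from `z` deletes one bit from `ζ(z)`. -/
lemma zeta_eraseIdx (z : List (ZMod q)) (p : ℕ) (hp : p < z.length) :
    ∃ t, (t = p ∨ t = p + 1) ∧ t < z.length ∧
      zeta (z.eraseIdx p) = (zeta z).eraseIdx t := by
  have hnz : (zeta z).length = z.length := length_zeta z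
  have hlenE : (z.eraseIdx p).length = z.length - 1 := by
    rw [List.length_eraseIdx]; simp [hp]
  have hlenzE : (zeta (z.eraseIdx p)).length = z.length - 1 := by
    rw [length_zeta, hlenE]
  have hL1 : ∀ t, t < p → (zeta (z.eraseIdx p)).getD t false =
      (zeta z).getD t false := by
    intro t ht
    rw [getD_zeta _ t (by omega), getD_zeta z t (by omega)]
    rcases Nat.eq_zero_or_pos t with rfl | htpos
    · simp
    · rw [if_neg (show ¬ t = 0 by omega), if_neg (show ¬ t = 0 by omega),
        getD_eraseIdx' z 0 p (t - 1) hp (by omega),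
        getD_eraseIdx' z 0 p t hp (by omega),
        if_pos (show t - 1 < p by omega), if_pos (show t < p by omega)]
  have hL2 : p < z.length - 1 → (zeta (z.eraseIdx p)).getD p false =
      (if p = 0 then true
        else decide ((z.getD (p - 1) 0).val ≤ (z.getD (p + 1) 0).val)) := by
    intro hplt
    rw [getD_zeta _ p (by omega)]
    rcases Nat.eq_zero_or_pos p with rfl | hppos
    · simp
    · rw [if_neg (show ¬ p = 0 by omega), if_neg (show ¬ p = 0 by omega),
        getD_eraseIdx' z 0 p (p - 1) hp (by omega),
        getD_eraseIdx' z 0 p p hp (by omega),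
        if_pos (show p - 1 < p by omega), if_neg (show ¬ p < p by omega)]
  have hL3 : ∀ t, p < t → t < z.length - 1 → (zeta (z.eraseIdx p)).getD t false =
      (zeta z).getD (t + 1) false := by
    intro t ht1 ht2
    rw [getD_zeta _ t (by omega), getD_zeta z (t + 1) (by omega),
      if_neg (show ¬ t = 0 by omega), if_neg (show ¬ t + 1 = 0 by omega),
      getD_eraseIdx' z 0 p (t - 1) hp (by omega),
      getD_eraseIdx' z 0 p t hp (by omega),
      if_neg (show ¬ t - 1 < p by omega), if_neg (show ¬ t < p by omega)]
    simp only [Nat.add_sub_cancel]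
    rw [show t - 1 + 1 = t from by omega]
  have hRlen : ∀ T, T < z.length → ((zeta z).eraseIdx T).length = z.length - 1 := by
    intro T hT
    rw [List.length_eraseIdx, hnz, if_pos hT]
  have hR1 : ∀ T, T < z.length → ∀ t, t < T → ((zeta z).eraseIdx T).getD t false =
      (zeta z).getD t false := by
    intro T hT t ht
    rw [getD_eraseIdx' (zeta z) false T t (by omega) (by omega),
      if_pos (show t < T by omega)]
  have hR2 : ∀ T, T < z.length → ∀ t, T ≤ t → t < z.length - 1 →
      ((zeta z).eraseIdx T).getD t false = (zeta z).getD (t + 1) false := by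
    intro T hT t ht1 ht2
    rw [getD_eraseIdx' (zeta z) false T t (by omega) (by omega),
      if_neg (show ¬ t < T by omega)]
  by_cases hlast : p + 1 = z.length
  · refine ⟨p, Or.inl rfl, hp, ?_⟩
    apply eq_of_getD false
    · rw [hlenzE, hRlen p hp]
    · intro t ht
      rw [hlenzE] at ht
      rw [hL1 t (by omega), hR1 p hp t (by omega)]
  · have hp1 : p + 1 < z.length := by omega
    have hCAB :
        (if p = 0 then true
          else decide ((z.getD (p - 1) 0).val ≤ (z.getD (p + 1) 0).val)) =
          (zeta z).getD p false ∨
        (if p = 0 then true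
          else decide ((z.getD (p - 1) 0).val ≤ (z.getD (p + 1) 0).val)) =
          (zeta z).getD (p + 1) false := by
      by_cases hp0 : p = 0
      · subst hp0
        left
        rw [getD_zeta z 0 (by omega)]
        simp
      · rw [getD_zeta z p (by omega), getD_zeta z (p + 1) (by omega),
          if_neg hp0, if_neg hp0, if_neg (show ¬ p + 1 = 0 by omega)]
        simp only [Nat.add_sub_cancel]
        exact decide_trich ((z.getD (p - 1) 0).val) ((z.getD p 0).val)
          ((z.getD (p + 1) 0).val)
    rcases hCAB with hCA | hCB
    · refine ⟨p + 1, Or.inr rfl, hp1, ?_⟩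
      apply eq_of_getD false
      · rw [hlenzE, hRlen (p + 1) hp1]
      · intro t ht
        rw [hlenzE] at ht
        rcases Nat.lt_trichotomy t p with h' | h' | h'
        · rw [hL1 t h', hR1 (p + 1) hp1 t (by omega)]
        · subst h'
          rw [hL2 (by omega), hR1 (t + 1) hp1 t (by omega), hCA]
        · rw [hL3 t h' ht, hR2 (p + 1) hp1 t (by omega) (by omega)]
    · refine ⟨p, Or.inl rfl, hp, ?_⟩
      apply eq_of_getD false
      · rw [hlenzE, hRlen p hp]
      · intro t ht
        rw [hlenzE] at ht
        rcases Nat.lt_trichotomy t p with h' | h' | h'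
        · rw [hL1 t h', hR1 p hp t h']
        · subst h'
          rw [hL2 (by omega), hR2 t hp t (by omega) (by omega), hCB]
        · rw [hL3 t h' ht, hR2 p hp t (by omega) (by omega)]

end ZetaLemmas
section CoreVT

/-- Uniqueness for the binary VT-type constraint: two insertions into `x` with
the same weighted syndrome mod `m > |x|` and true leading bits coincide. -/
lemma coreVT (m : ℕ) (x : List Bool) (p r : ℕ) (a c : Bool)
    (hpr : p ≤ r) (hr : r ≤ x.length) (hm : x.length + 1 ≤ m)
    (h1 : (insA p a x).getD 0 false = true) (h2 : (insA r c x).getD 0 false = true)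
    (hV : Vb (insA p a x) ≡ Vb (insA r c x) [MOD m]) : insA p a x = insA r c x := by
  have hp : p ≤ x.length := le_trans hpr hr
  rw [Vb_insA x p a hp, Vb_insA x r c hr] at hV
  have hsplit : (x.drop p).count true =
      ((x.drop p).take (r - p)).count true + (x.drop r).count true := by
    conv_lhs => rw [show x.drop p = (x.drop p).take (r - p) ++ x.drop r by
      conv_lhs => rw [← List.take_append_drop (r - p) (x.drop p)]
      rw [List.drop_drop, show p + (r - p) = r by omega]]
    rw [List.count_append]
  have hseglen : ((x.drop p).take (r - p)).length = r - p := by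
    rw [List.length_take, List.length_drop]; omega
  have hNpb : (x.drop p).count true ≤ x.length - p := by
    have := List.count_le_length (a := true) (l := x.drop p)
    rwa [List.length_drop] at this
  have hNrb : (x.drop r).count true ≤ x.length - r := by
    have := List.count_le_length (a := true) (l := x.drop r)
    rwa [List.length_drop] at this
  have hsegc : ((x.drop p).take (r - p)).count true ≤ r - p := by
    have := List.count_le_length (a := true) (l := (x.drop p).take (r - p))
    rwa [hseglen] at this
  have hA1 : (if a then p else 0) ≤ p := by split <;> omega
  have hC1 : (if c then r else 0) ≤ r := by split <;> omega
  have heq : (if a then p else 0) + (x.drop p).count true =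
      (if c then r else 0) + (x.drop r).count true := by
    have h' : (if a then p else 0) + (x.drop p).count true ≡
        (if c then r else 0) + (x.drop r).count true [MOD m] :=
      Nat.ModEq.add_left_cancel' (Vb x) (by
        simpa [Nat.add_assoc] using hV)
    have hb1 : (if a then p else 0) + (x.drop p).count true < m := by omega
    have hb2 : (if c then r else 0) + (x.drop r).count true < m := by omega
    rw [Nat.ModEq, Nat.mod_eq_of_lt hb1, Nat.mod_eq_of_lt hb2] at h'
    exact h'
  have hselt : ∀ (d : Bool) t, t < r - p →
      ((x.drop p).take (r - p)).getD t d = x.getD (p + t) d := by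
    intro d t ht
    rw [List.getD_eq_getElem _ d (by omega), List.getElem_take, List.getElem_drop,
      List.getD_eq_getElem x d (by omega)]
  cases c with
  | true =>
    simp only [if_true] at heq
    cases a with
    | true =>
      simp only [if_true] at heq
      have hK : ((x.drop p).take (r - p)).count true = r - p := by omega
      have hall6 : ∀ bb ∈ (x.drop p).take (r - p), true = bb :=
        List.count_eq_length.mp (by rw [hK, hseglen])
      have hall : ∀ t, t < r - p → x.getD (p + t) true = true := by
        intro t ht
        rw [← hselt true t ht]
        refine (hall6 _ ?_).symm
        rw [List.getD_eq_getElem _ true (by omega)]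
        exact List.getElem_mem (by omega)
      have := insA_run true x (r - p) p (by omega) hall
      rwa [show p + (r - p) = r by omega] at this
    | false =>
      exfalso
      simp only [Bool.false_eq_true, if_false] at heq
      have hp0 : p = 0 := by omega
      subst hp0
      rw [insA_zero] at h1
      simp at h1
  | false =>
    simp only [Bool.false_eq_true, if_false] at heq
    cases a with
    | false =>
      simp only [Bool.false_eq_true, if_false] at heq
      have hK : ((x.drop p).take (r - p)).count true = 0 := by omega
      have hnotmem : true ∉ (x.drop p).take (r - p) := List.count_eq_zero.mp hK
      have hall : ∀ t, t < r - p → x.getD (p + t) false = false := by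
        intro t ht
        rw [← hselt false t ht]
        have h8 : ((x.drop p).take (r - p)).getD t false ∈ (x.drop p).take (r - p) := by
          rw [List.getD_eq_getElem _ false (by omega)]
          exact List.getElem_mem (by omega)
        by_cases h9 : ((x.drop p).take (r - p)).getD t false = true
        · exact absurd (h9 ▸ h8) hnotmem
        · simpa using h9
      have := insA_run false x (r - p) p (by omega) hall
      rwa [show p + (r - p) = r by omega] at this
    | true =>
      exfalso
      simp only [if_true] at heq
      have hp0 : p = 0 := by omega
      have hK : ((x.drop p).take (r - p)).count true = 0 := by omega
      subst hp0
      rcases Nat.eq_zero_or_pos r with rfl | hrpos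
      · rw [insA_zero] at h2; simp at h2
      · have hx0 : 0 < x.length := by omega
        rw [getD_insA false false x r 0 hr, if_pos hrpos] at h2
        have hnotmem : true ∉ (x.drop 0).take (r - 0) := List.count_eq_zero.mp hK
        have h9 : ((x.drop 0).take (r - 0)).getD 0 false ∈ (x.drop 0).take (r - 0) := by
          rw [List.getD_eq_getElem _ false (by rw [hseglen]; omega)]
          exact List.getElem_mem (by rw [hseglen]; omega)
        have h10 := hselt false 0 (by omega)
        rw [h10] at h9
        simp only [Nat.zero_add] at h9
        rw [h2] at h9
        exact hnotmem h9
end CoreVT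

section ChainLemma

variable {q : ℕ}

/-- If inserting the same symbol at two positions gives words with equal
`ζ`-images, the words coincide. -/
lemma insA_zeta_inj [NeZero q] (b : ZMod q) (w : List (ZMod q)) :
    ∀ (d i j : ℕ), j - i = d → i ≤ j → j ≤ w.length →
      zeta (insA i b w) = zeta (insA j b w) → insA i b w = insA j b w := by
  intro d
  induction d with
  | zero =>
    intro i j h1 h2 _ _
    have : i = j := by omega
    subst this
    rfl
  | succ d IH =>
    intro i j hd hij hj hz
    have hij' : i < j := by omega
    have hiw : i ≤ w.length := by omega
    have hul : (insA i b w).length = w.length + 1 := length_insA b hiw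
    have hvl : (insA j b w).length = w.length + 1 := length_insA b hj
    have hugetD := getD_insA b (0 : ZMod q) w i
    have hvgetD := getD_insA b (0 : ZMod q) w j
    have hzu : ∀ s, 0 < s → s ≤ w.length → (zeta (insA i b w)).getD s false =
        decide (((insA i b w).getD (s - 1) 0).val ≤ ((insA i b w).getD s 0).val) := by
      intro s hs1 hs2
      rw [getD_zeta _ s (by omega), if_neg (show ¬ s = 0 by omega)]
    have hzv : ∀ s, 0 < s → s ≤ w.length → (zeta (insA j b w)).getD s false =
        decide (((insA j b w).getD (s - 1) 0).val ≤ ((insA j b w).getD s 0).val) := by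
      intro s hs1 hs2
      rw [getD_zeta _ s (by omega), if_neg (show ¬ s = 0 by omega)]
    have hv_s : ∀ s, 0 < s → s < j → (zeta (insA j b w)).getD s false =
        decide ((w.getD (s - 1) 0).val ≤ (w.getD s 0).val) := by
      intro s hs1 hs2
      rw [hzv s hs1 (by omega), hvgetD (s - 1) hj, hvgetD s hj,
        if_pos (show s - 1 < j by omega), if_pos (show s < j by omega)]
    have hv_j : (zeta (insA j b w)).getD j false =
        decide ((w.getD (j - 1) 0).val ≤ b.val) := by
      rw [hzv j (by omega) hj, hvgetD (j - 1) hj, hvgetD j hj,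
        if_pos (show j - 1 < j by omega), if_neg (show ¬ j < j by omega),
        if_pos (show j = j from rfl)]
    have hu_i1 : (zeta (insA i b w)).getD (i + 1) false =
        decide (b.val ≤ (w.getD i 0).val) := by
      rw [hzu (i + 1) (by omega) (by omega)]
      simp only [Nat.add_sub_cancel]
      rw [hugetD i hiw, hugetD (i + 1) hiw,
        if_neg (show ¬ i < i by omega), if_pos (show i = i from rfl),
        if_neg (show ¬ i + 1 < i by omega), if_neg (show ¬ i + 1 = i by omega)]
      simp only [Nat.add_sub_cancel]
    have hu_s : ∀ s, i + 2 ≤ s → s ≤ w.length → (zeta (insA i b w)).getD s false =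
        decide ((w.getD (s - 2) 0).val ≤ (w.getD (s - 1) 0).val) := by
      intro s hs1 hs2
      rw [hzu s (by omega) hs2, hugetD (s - 1) hiw, hugetD s hiw,
        if_neg (show ¬ s - 1 < i by omega), if_neg (show ¬ s - 1 = i by omega),
        if_neg (show ¬ s < i by omega), if_neg (show ¬ s = i by omega),
        show s - 1 - 1 = s - 2 from by omega]
    have hbval : b.val = (w.getD i 0).val := by
      by_cases hji : j = i + 1
      · have h10 : (zeta (insA i b w)).getD (i + 1) false =
            (zeta (insA j b w)).getD (i + 1) false := by rw [hz]
        rw [hu_i1, ← hji, hv_j, hji] at h10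
        simp only [Nat.add_sub_cancel] at h10
        have h11 := decide_eq_decide.mp h10
        omega
      · have hj2 : i + 2 ≤ j := by omega
        have claim1 : ∀ s, i + 1 ≤ s → s < j →
            decide ((w.getD (s - 1) 0).val ≤ (w.getD s 0).val) =
            decide (b.val ≤ (w.getD i 0).val) := by
          intro s hs
          induction s, hs using Nat.le_induction with
          | base =>
            intro hlt
            have h10 : (zeta (insA i b w)).getD (i + 1) false =
                (zeta (insA j b w)).getD (i + 1) false := by rw [hz]
            rw [hu_i1, hv_s (i + 1) (by omega) hlt] at h10
            simpa using h10.symm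
          | succ s hs IH2 =>
            intro hlt
            have h10 : (zeta (insA i b w)).getD (s + 1) false =
                (zeta (insA j b w)).getD (s + 1) false := by rw [hz]
            rw [hu_s (s + 1) (by omega) (by omega),
              hv_s (s + 1) (by omega) hlt] at h10
            simp only [Nat.add_sub_cancel] at h10 ⊢
            rw [show s + 1 - 2 = s - 1 from by omega] at h10
            rw [← h10]
            exact IH2 (by omega)
        have claim2 : ∀ s, i ≤ s → s < j →
            (decide (b.val ≤ (w.getD i 0).val) = true →
              (w.getD i 0).val ≤ (w.getD s 0).val) ∧
            (decide (b.val ≤ (w.getD i 0).val) = false →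
              (w.getD s 0).val ≤ (w.getD i 0).val) := by
          intro s hs
          induction s, hs using Nat.le_induction with
          | base => intro _; exact ⟨fun _ => le_refl _, fun _ => le_refl _⟩
          | succ s hs IH2 =>
            intro hlt
            have h12 := claim1 (s + 1) (by omega) hlt
            have h13 := IH2 (by omega)
            simp only [Nat.add_sub_cancel] at h12
            constructor
            · intro he
              rw [he] at h12
              have h14 := of_decide_eq_true h12
              exact le_trans (h13.1 he) h14
            · intro he
              rw [he] at h12
              have h14 := of_decide_eq_false h12
              have h15 := h13.2 he
              omega
        have h15 : (zeta (insA i b w)).getD j false =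
            (zeta (insA j b w)).getD j false := by rw [hz]
        rw [hu_s j hj2 hj, hv_j] at h15
        have h16 := claim1 (j - 1) (by omega) (by omega)
        rw [show j - 1 - 1 = j - 2 from by omega] at h16
        rw [h16] at h15
        have h17 := claim2 (j - 1) (by omega) (by omega)
        rcases hbe : decide (b.val ≤ (w.getD i 0).val) with _ | _
        · rw [hbe] at h15 h17
          have h18 := of_decide_eq_false hbe
          have h19 := of_decide_eq_false h15.symm
          have h20 := h17.2 rfl
          omega
        · rw [hbe] at h15 h17
          have h18 := of_decide_eq_true hbe
          have h19 := of_decide_eq_true h15.symm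
          have h20 := h17.1 rfl
          omega
    have hb : b = w.getD i 0 := ZMod.val_injective q hbval
    have hgd : w.getD i b = b := by
      rw [List.getD_eq_getElem w b (by omega), ← List.getD_eq_getElem w 0 (by omega)]
      exact hb.symm
    have hstep : insA i b w = insA (i + 1) b w := insA_step b w i (by omega) hgd
    rw [hstep] at hz ⊢
    exact IH (i + 1) j (by omega) (by omega) hj hz

end ChainLemma

section SharedLemma

variable {q : ℕ}

/-- The shared decoding core: if inserting the same symbol `b` into `x` at two
positions yields words with congruent Tenengolts syndromes, the words agree. -/
lemma shared_indel [NeZero q] (m : ℕ) (b : ZMod q) (x : List (ZMod q)) (i j : ℕ)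
    (hij : i ≤ j) (hj : j ≤ x.length) (hm : x.length + 1 ≤ m)
    (hts : tqSum (insA i b x) ≡ tqSum (insA j b x) [MOD m]) :
    insA i b x = insA j b x := by
  have hix : i ≤ x.length := le_trans hij hj
  have hul : (insA i b x).length = x.length + 1 := length_insA b hix
  have hvl : (insA j b x).length = x.length + 1 := length_insA b hj
  obtain ⟨t, htor, htlt, hteq⟩ := zeta_eraseIdx (insA i b x) i (by omega)
  obtain ⟨t', htor', htlt', hteq'⟩ := zeta_eraseIdx (insA j b x) j (by omega)
  rw [eraseIdx_insA b x i hix] at hteq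
  rw [eraseIdx_insA b x j hj] at hteq'
  -- zeta u = insA t at (zeta x), zeta v = insA t' ct (zeta x)
  have hzl : (zeta (insA i b x)).length = x.length + 1 := by rw [length_zeta, hul]
  have hzl' : (zeta (insA j b x)).length = x.length + 1 := by rw [length_zeta, hvl]
  have hrep : insA t ((zeta (insA i b x)).getD t false) (zeta x) = zeta (insA i b x) := by
    conv_rhs => rw [← insA_getD_eraseIdx false (zeta (insA i b x)) t (by omega)]
    rw [← hteq]
  have hrep' : insA t' ((zeta (insA j b x)).getD t' false) (zeta x) = zeta (insA j b x) := by
    conv_rhs => rw [← insA_getD_eraseIdx false (zeta (insA j b x)) t' (by omega)]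
    rw [← hteq']
  by_cases hij' : i = j
  · subst hij'; rfl
  · have hijlt : i < j := by omega
    have htt : t ≤ t' := by
      rcases htor with rfl | rfl <;> rcases htor' with rfl | rfl <;> omega
    have hzx : (zeta x).length = x.length := length_zeta x
    have hcore := coreVT m (zeta x) t t' ((zeta (insA i b x)).getD t false)
      ((zeta (insA j b x)).getD t' false) htt (by omega) (by omega)
      (by rw [hrep]; exact zeta_head _ (by omega))
      (by rw [hrep']; exact zeta_head _ (by omega))
      (by rw [hrep, hrep']; exact hts)
    have hzeq : zeta (insA i b x) = zeta (insA j b x) := by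
      rw [← hrep, ← hrep', hcore]
    exact insA_zeta_inj b x (j - i) i j rfl (by omega) hj hzeq

end SharedLemma
/-- when the length of the stored word is known, Tenengolts'
variable-length `q`-ary code `C_Tq(α, β, m)` corrects a single insertion or
deletion. -/
theorem tenengolts_corrects_single_indel
    (q m α β : ℕ) (hq : 2 ≤ q) (hm : 1 ≤ m) (hα : α ≤ q - 1) (hβ : β ≤ m - 1)
    (u v : List (ZMod q)) (hu : u ∈ CTq (q := q) α β m) (hv : v ∈ CTq (q := q) α β m)
    (hlen : u.length = v.length) :
    (∀ w, delQ u w → delQ v w → u = v) ∧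
    (∀ w, insQ u w → insQ v w → u = v) := by
  haveI : NeZero q := ⟨by omega⟩
  obtain ⟨hul, hus, hut⟩ := hu
  obtain ⟨hvl, hvs, hvt⟩ := hv
  have hts : tqSum u ≡ tqSum v [MOD m] := by rw [Nat.ModEq, hut, hvt]
  constructor
  · -- deletion case
    rintro w ⟨i, hi, hwu⟩ ⟨j, hj, hwv⟩
    have hjv : j < u.length := by omega
    have hu_rep : insA i (u.getD i 0) (u.eraseIdx i) = u := insA_getD_eraseIdx 0 u i hi
    have hv_rep : insA j (v.getD j 0) (v.eraseIdx j) = v := insA_getD_eraseIdx 0 v j hj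
    have hw : u.eraseIdx i = v.eraseIdx j := by rw [← hwu, ← hwv]
    have hsu : (u.map ZMod.val).sum =
        (u.getD i 0).val + ((u.eraseIdx i).map ZMod.val).sum := by
      conv_lhs => rw [← hu_rep]
      rw [sum_map_insA]
    have hsv : (v.map ZMod.val).sum =
        (v.getD j 0).val + ((v.eraseIdx j).map ZMod.val).sum := by
      conv_lhs => rw [← hv_rep]
      rw [sum_map_insA]
    have hbc : u.getD i 0 = v.getD j 0 := by
      apply ZMod.val_injective q
      have hmod : (u.getD i 0).val + ((u.eraseIdx i).map ZMod.val).sum ≡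
          (v.getD j 0).val + ((u.eraseIdx i).map ZMod.val).sum [MOD q] := by
        rw [Nat.ModEq, ← hsu]
        conv_rhs => rw [hw, ← hsv]
        rw [hus, hvs]
      have h2 := Nat.ModEq.add_right_cancel' _ hmod
      rw [Nat.ModEq, Nat.mod_eq_of_lt (ZMod.val_lt _), Nat.mod_eq_of_lt (ZMod.val_lt _)] at h2
      exact h2
    have hwlen : (u.eraseIdx i).length = u.length - 1 := by
      rw [List.length_eraseIdx]; simp [hi]
    have hmlen : (u.eraseIdx i).length + 1 ≤ m := by omega
    rcases le_total i j with hle | hle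
    · have hkey : insA i (u.getD i 0) (u.eraseIdx i) =
          insA j (u.getD i 0) (u.eraseIdx i) :=
        shared_indel m _ _ i j hle (by omega) hmlen (by
          rw [hu_rep, hbc, hw, hv_rep]; exact hts)
      rw [← hu_rep, hkey, hbc, hw, hv_rep]
    · have hwlen' : (v.eraseIdx j).length = u.length - 1 := by
        rw [List.length_eraseIdx]; simp [hj]; omega
      have hkey : insA j (v.getD j 0) (v.eraseIdx j) =
          insA i (v.getD j 0) (v.eraseIdx j) :=
        shared_indel m _ _ j i hle (by omega) (by omega) (by
          rw [hv_rep, ← hbc, ← hw, hu_rep]; exact hts.symm)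
      rw [← hv_rep, hkey, ← hbc, ← hw, hu_rep]
  · -- insertion case
    rintro w ⟨i, b, hi, hw1⟩ ⟨j, c, hj, hw2⟩
    have hw1' : w = insA i b u := hw1
    have hw2' : w = insA j c v := hw2
    have hsu : (w.map ZMod.val).sum = b.val + (u.map ZMod.val).sum := by
      rw [hw1', sum_map_insA]
    have hsv : (w.map ZMod.val).sum = c.val + (v.map ZMod.val).sum := by
      rw [hw2', sum_map_insA]
    have hbc : b = c := by
      apply ZMod.val_injective q
      have hSuv : (v.map ZMod.val).sum ≡ (u.map ZMod.val).sum [MOD q] := by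
        rw [Nat.ModEq, hus, hvs]
      have h1 : b.val + (v.map ZMod.val).sum ≡
          b.val + (u.map ZMod.val).sum [MOD q] := Nat.ModEq.add_left _ hSuv
      have h2 : b.val + (u.map ZMod.val).sum = c.val + (v.map ZMod.val).sum := by
        rw [← hsu, hsv]
      rw [h2] at h1
      have h3 := Nat.ModEq.add_right_cancel' _ h1
      rw [Nat.ModEq, Nat.mod_eq_of_lt (ZMod.val_lt _), Nat.mod_eq_of_lt (ZMod.val_lt _)] at h3
      exact h3
    subst hbc
    have key : ∀ (i j : ℕ) (u' v' : List (ZMod q)),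
        i < j → j ≤ v'.length → u'.length = v'.length → u'.length ≤ m →
        insA i b u' = insA j b v' → tqSum u' ≡ tqSum v' [MOD m] → u' = v' := by
      intro i j u' v' hij hjv hlen' hum heq hts'
      have hju : j ≤ u'.length := by omega
      have hv'1 : v' = (insA i b u').eraseIdx j := by
        rw [heq, eraseIdx_insA b v' j hjv]
      have hv_rep : v' = insA i b (u'.eraseIdx (j - 1)) := by
        rw [hv'1, eraseIdx_insA_comm b u' i j hij hju]
      have hgd : u'.getD (j - 1) 0 = b := by
        have h3 : (insA j b v').getD j 0 = b := by
          rw [getD_insA b 0 v' j j hjv, if_neg (by omega), if_pos rfl]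
        rw [← heq] at h3
        rw [getD_insA b 0 u' i j (by omega), if_neg (by omega), if_neg (by omega)] at h3
        exact h3
      have hu_rep : u' = insA (j - 1) b (u'.eraseIdx (j - 1)) := by
        conv_lhs => rw [← insA_getD_eraseIdx 0 u' (j - 1) (by omega)]
        rw [hgd]
      have hxlen : (u'.eraseIdx (j - 1)).length = u'.length - 1 := by
        rw [List.length_eraseIdx]; simp; omega
      have hkey : insA i b (u'.eraseIdx (j - 1)) =
          insA (j - 1) b (u'.eraseIdx (j - 1)) :=
        shared_indel m b _ i (j - 1) (by omega) (by omega) (by omega) (by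
          rw [← hv_rep, ← hu_rep]; exact hts'.symm)
      rw [hu_rep, ← hkey, ← hv_rep]
    rcases Nat.lt_trichotomy i j with hij | hij | hij
    · exact key i j u v hij hj hlen hul (hw1'.symm.trans hw2') hts
    · subst hij
      have h4 : u = (insA i b u).eraseIdx i := (eraseIdx_insA b u i hi).symm
      rw [h4, ← hw1', hw2', eraseIdx_insA b v i hj]
    · exact (key j i v u hij hi hlen.symm (by omega)
        (hw2'.symm.trans hw1') hts.symm).symm

end NoisyDup
end
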